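/- arXiv:1606.08212 — 9 statements merged into one kernel-verified Lean document; each statement's English description precedes it below -/
import Mathlib

section
/- If B_1 and B_2 are d×d Bernoulli-compatible matrices, then their Hadamard (entrywise) product B_1 ∘ B_2 is Bernoulli-compatible; that is, the set of d×d Bernoulli-compatible matrices is closed under the Hadamard product (Proposition 2.2(iv)). -/
open MeasureTheory ProbabilityTheory Filter Set

noncomputable section

/-- A Bernoulli-compatible matrix: `B i j = E[X i * X j]` for some random vector `X`
taking values in `{0,1}^d` on some probability space. -/
def IsBernoulliCompatible {d : ℕ} (B : Matrix (Fin d) (Fin d) ℝ) : Prop :=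
  ∃ (Ω : Type) (_ : MeasurableSpace Ω) (μ : Measure Ω),
    IsProbabilityMeasure μ ∧
    ∃ X : Ω → Fin d → ℝ, Measurable X ∧
      (∀ ω i, X ω i = 0 ∨ X ω i = 1) ∧
      (∀ i j, B i j = ∫ ω, X ω i * X ω j ∂μ)

/-- The (lower) tail-dependence coefficient of `Yi` and `Yj` exists and equals `l`:
`P(Yi ≤ u, Yj ≤ u)/u → l` as `u ↓ 0`. -/
def HasTailDepCoeff {Ω : Type} [MeasurableSpace Ω] (μ : Measure Ω)
    (Yi Yj : Ω → ℝ) (l : ℝ) : Prop :=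
  Filter.Tendsto (fun u : ℝ => (μ {ω | Yi ω ≤ u ∧ Yj ω ≤ u}).toReal / u)
    (nhdsWithin 0 (Set.Ioi 0)) (nhds l)

/-- The uniform distribution on `[0,1]`. -/
def stdUniform : Measure ℝ := volume.restrict (Set.Icc (0:ℝ) 1)

/-- A tail-dependence matrix: the matrix of pairwise (lower) tail-dependence coefficients
of some random vector with standard uniform margins. -/
def IsTailDependenceMatrix {d : ℕ} (Λ : Matrix (Fin d) (Fin d) ℝ) : Prop :=
  ∃ (Ω : Type) (_ : MeasurableSpace Ω) (μ : Measure Ω),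
    IsProbabilityMeasure μ ∧
    ∃ Y : Ω → Fin d → ℝ, Measurable Y ∧
      (∀ i, μ.map (fun ω => Y ω i) = stdUniform) ∧
      (∀ i j, HasTailDepCoeff μ (fun ω => Y ω i) (fun ω => Y ω j) (Λ i j))

/-- Proposition 2.2(iv): the set of `d×d` Bernoulli-compatible matrices is closed under
the Hadamard (entrywise) product. -/
theorem bernoulli_compatible_hadamard {d : ℕ} (B₁ B₂ : Matrix (Fin d) (Fin d) ℝ)
    (h₁ : IsBernoulliCompatible B₁) (h₂ : IsBernoulliCompatible B₂) :
    IsBernoulliCompatible (Matrix.of fun i j => B₁ i j * B₂ i j) := by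
  obtain ⟨Ω₁, m₁, μ₁, hμ₁, X₁, hX₁m, hX₁v, hX₁e⟩ := h₁
  obtain ⟨Ω₂, m₂, μ₂, hμ₂, X₂, hX₂m, hX₂v, hX₂e⟩ := h₂
  refine ⟨Ω₁ × Ω₂, inferInstance, μ₁.prod μ₂, inferInstance,
    fun ω i => X₁ ω.1 i * X₂ ω.2 i, ?_, ?_, ?_⟩
  · exact measurable_pi_lambda _ fun i =>
      ((measurable_pi_apply i).comp (hX₁m.comp measurable_fst)).mul
      ((measurable_pi_apply i).comp (hX₂m.comp measurable_snd))
  · intro ω i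
    rcases hX₁v ω.1 i with h | h <;> rcases hX₂v ω.2 i with h' | h' <;> simp [h, h']
  · intro i j
    have key : ∫ ω : Ω₁ × Ω₂, (X₁ ω.1 i * X₁ ω.1 j) * (X₂ ω.2 i * X₂ ω.2 j)
        ∂(μ₁.prod μ₂) = (∫ ω, X₁ ω i * X₁ ω j ∂μ₁) * ∫ ω, X₂ ω i * X₂ ω j ∂μ₂ :=
      integral_prod_mul (μ := μ₁) (ν := μ₂)
        (f := fun x => X₁ x i * X₁ x j) (g := fun y => X₂ y i * X₂ y j)
    simp only [Matrix.of_apply]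
    rw [hX₁e i j, hX₂e i j, ← key]
    congr 1
    funext ω
    ring
end
end

section
/- A d×d real matrix B is Bernoulli-compatible if and only if B is a convex combination of matrices of the form p·pᵀ with p ∈ {0,1}^d; that is, the set of d×d Bernoulli-compatible matrices equals the convex hull of { p·pᵀ : p ∈ {0,1}^d } (Theorem 2.4). In particular, this set is closed under convergence in the Euclidean norm. -/
open MeasureTheory ProbabilityTheory Filter Set

noncomputable section

open Classical in
/-- hull ⊆ Bern -/
lemma aux_hull_subset {d : ℕ} (B : Matrix (Fin d) (Fin d) ℝ)
    (hB : B ∈ convexHull ℝ {B : Matrix (Fin d) (Fin d) ℝ |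
        ∃ p : Fin d → ℝ, (∀ i, p i = 0 ∨ p i = 1) ∧ B = Matrix.vecMulVec p p}) :
    IsBernoulliCompatible B := by
  rw [convexHull_eq] at hB
  obtain ⟨ι, t, w, z, hw0, hw1, hz, hcm⟩ := hB
  letI : MeasurableSpace ι := ⊤
  haveI : MeasurableSingletonClass ι := ⟨fun _ => trivial⟩
  set pf : ι → Fin d → ℝ := fun k => if h : k ∈ t then (hz k h).choose else 0 with hpf
  set μ : Measure ι := ∑ k ∈ t, (ENNReal.ofReal (w k)) • Measure.dirac k with hμ
  have hμuniv : μ Set.univ = 1 := by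
    rw [hμ]
    simp only [Measure.coe_finset_sum, Finset.sum_apply, Measure.smul_apply, smul_eq_mul,
      Measure.dirac_apply_of_mem (Set.mem_univ _), mul_one]
    rw [← ENNReal.ofReal_sum_of_nonneg hw0, hw1, ENNReal.ofReal_one]
  refine ⟨ι, inferInstance, μ, ⟨hμuniv⟩, pf, measurable_from_top, ?_, ?_⟩
  · intro k i
    by_cases h : k ∈ t
    · have := (hz k h).choose_spec.1 i
      simp only [hpf, dif_pos h]
      exact this
    · simp [hpf, dif_neg h]
  · intro i j
    have hint : ∀ k : ι, Integrable (fun ω => pf ω i * pf ω j)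
        ((ENNReal.ofReal (w k)) • Measure.dirac k) := by
      intro k
      exact ((integrable_const (pf k i * pf k j)).congr (ae_eq_dirac (a := k) (fun ω => pf ω i * pf ω j)).symm).smul_measure ENNReal.ofReal_ne_top
    rw [hμ, integral_finset_sum_measure (fun k _ => hint k)]
    have hz' : ∀ k ∈ t, z k = Matrix.vecMulVec (pf k) (pf k) := by
      intro k hk
      have := (hz k hk).choose_spec.2
      simp only [hpf, dif_pos hk]
      exact this
    have hBcm : B = t.centerMass w z := hcm.symm
    rw [hBcm, Finset.centerMass_eq_of_sum_1 _ _ hw1]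
    rw [Matrix.sum_apply]
    refine Finset.sum_congr rfl fun k hk => ?_
    rw [integral_smul_measure, integral_dirac]
    rw [hz' k hk]
    simp [Matrix.vecMulVec_apply, ENNReal.toReal_ofReal (hw0 k hk), smul_eq_mul]

/-- Bern ⊆ hull -/
lemma aux_bern_subset {d : ℕ} (B : Matrix (Fin d) (Fin d) ℝ)
    (hB : IsBernoulliCompatible B) :
    B ∈ convexHull ℝ {B : Matrix (Fin d) (Fin d) ℝ |
        ∃ p : Fin d → ℝ, (∀ i, p i = 0 ∨ p i = 1) ∧ B = Matrix.vecMulVec p p} := by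
  classical
  obtain ⟨Ω, mΩ, μ, hprob, X, hXm, hXv, hBij⟩ := hB
  set Y : Ω → (Fin d → Bool) := fun ω i => if X ω i = 1 then true else false with hY
  have hYm : Measurable Y := by
    rw [hY]
    refine measurable_pi_lambda _ fun i => Measurable.ite ?_ measurable_const measurable_const
    exact ((measurable_pi_apply i).comp hXm) (measurableSet_singleton 1)
  set pv : (Fin d → Bool) → Fin d → ℝ := fun q i => if q i then 1 else 0 with hpv
  have hXY : ∀ ω i, X ω i = pv (Y ω) i := by
    intro ω i
    rcases hXv ω i with h | h <;> simp [hpv, hY, h]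
  set w : (Fin d → Bool) → ℝ := fun q => ((μ.map Y) {q}).toReal with hw
  haveI : IsProbabilityMeasure (μ.map Y) := Measure.isProbabilityMeasure_map hYm.aemeasurable
  have hw0 : ∀ q, 0 ≤ w q := fun q => ENNReal.toReal_nonneg
  have hsum : ∑ q : Fin d → Bool, (μ.map Y) {q} = 1 := by
    have h1 : (Set.univ : Set (Fin d → Bool)) = ⋃ q ∈ (Finset.univ : Finset (Fin d → Bool)), {q} := by
      simp only [Finset.mem_univ, Set.iUnion_true]
      exact (Set.iUnion_of_singleton _).symm
    have h2 := measure_biUnion_finset (μ := μ.map Y)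
      (s := (Finset.univ : Finset (Fin d → Bool))) (f := fun q => ({q} : Set (Fin d → Bool)))
      (fun a _ b _ hab => Set.disjoint_singleton.mpr hab)
      (fun b _ => measurableSet_singleton b)
    rw [← h2, ← h1, measure_univ]
  have hw1 : ∑ q : Fin d → Bool, w q = 1 := by
    rw [hw]
    rw [← ENNReal.toReal_sum (fun q _ => measure_ne_top _ _)]
    rw [hsum, ENNReal.toReal_one]
  have key : ∀ i j, B i j = ∑ q : Fin d → Bool, w q * (pv q i * pv q j) := by
    intro i j
    rw [hBij i j]
    have he : (fun ω => X ω i * X ω j) = fun ω => (fun q => pv q i * pv q j) (Y ω) := by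
      funext ω; rw [hXY ω i, hXY ω j]
    rw [he, ← integral_map hYm.aemeasurable
      ((measurable_of_countable (fun q => pv q i * pv q j)).aestronglyMeasurable)]
    rw [integral_fintype Integrable.of_finite]
    simp only [smul_eq_mul, hw, Measure.real_def]
  have hcm : (Finset.univ : Finset (Fin d → Bool)).centerMass w
      (fun q => Matrix.vecMulVec (pv q) (pv q)) = B := by
    rw [Finset.centerMass_eq_of_sum_1 _ _ hw1]
    ext i j
    rw [key i j]
    simp [Matrix.sum_apply, Matrix.vecMulVec_apply, smul_eq_mul, mul_assoc]
  exact hcm ▸ Finset.centerMass_mem_convexHull _ (fun q _ => hw0 q)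
    (by rw [hw1]; norm_num)
    (fun q _ => ⟨pv q, fun i => by by_cases h : q i <;> simp [hpv, h], rfl⟩)

/-- Theorem 2.4: the set of `d×d` Bernoulli-compatible matrices equals the convex hull of
`{p pᵀ : p ∈ {0,1}^d}`; in particular it is closed (under convergence in Euclidean norm). -/
theorem bernoulli_compatible_eq_convexHull (d : ℕ) :
    {B : Matrix (Fin d) (Fin d) ℝ | IsBernoulliCompatible B} =
      convexHull ℝ {B : Matrix (Fin d) (Fin d) ℝ |
        ∃ p : Fin d → ℝ, (∀ i, p i = 0 ∨ p i = 1) ∧ B = Matrix.vecMulVec p p} ∧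
    IsClosed {B : Matrix (Fin d) (Fin d) ℝ | IsBernoulliCompatible B} := by
  classical
  have heq : {B : Matrix (Fin d) (Fin d) ℝ | IsBernoulliCompatible B} =
      convexHull ℝ {B : Matrix (Fin d) (Fin d) ℝ |
        ∃ p : Fin d → ℝ, (∀ i, p i = 0 ∨ p i = 1) ∧ B = Matrix.vecMulVec p p} :=
    Set.Subset.antisymm (fun B hB => aux_bern_subset B hB) (fun B hB => aux_hull_subset B hB)
  refine ⟨heq, ?_⟩
  rw [heq]
  have hfin : ({B : Matrix (Fin d) (Fin d) ℝ |
      ∃ p : Fin d → ℝ, (∀ i, p i = 0 ∨ p i = 1) ∧ B = Matrix.vecMulVec p p}).Finite := by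
    refine Set.Finite.subset (Set.finite_range (fun q : Fin d → Bool =>
      Matrix.vecMulVec (fun i => if q i then (1:ℝ) else 0)
        (fun i => if q i then (1:ℝ) else 0))) ?_
    rintro B ⟨p, hp, rfl⟩
    refine ⟨fun i => if p i = 1 then true else false, ?_⟩
    have : (fun i => if (if p i = 1 then true else false) then (1:ℝ) else 0) = p := by
      funext i; rcases hp i with h | h <;> simp [h]
    simp only
    rw [this]
  exact hfin.isClosed_convexHull (𝕜 := ℝ)
end
end

section
/- Every d×d Bernoulli-compatible matrix is completely positive; that is, if B_{ij} = E[X_i X_j] for some random vector X taking values in {0,1}^d, then there exist m ∈ ℕ and a d×m matrix A with all entries nonnegative such that B = A·Aᵀ (Corollary 2.5). -/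
open MeasureTheory ProbabilityTheory Filter Set

noncomputable section

/-- Corollary 2.5: every Bernoulli-compatible matrix is completely positive. -/
theorem bernoulli_compatible_completelyPositive {d : ℕ} (B : Matrix (Fin d) (Fin d) ℝ)
    (hB : IsBernoulliCompatible B) :
    ∃ (m : ℕ) (A : Matrix (Fin d) (Fin m) ℝ), (∀ i j, 0 ≤ A i j) ∧ B = A * A.transpose := by
  classical
  obtain ⟨Ω, mΩ, μ, hμ, X, hXm, hX01, hBij⟩ := hB
  set f : (Fin d → Bool) → (Fin d → ℝ) := fun s i => if s i then 1 else 0 with hf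
  set E : (Fin d → Bool) → Set Ω := fun s => X ⁻¹' {f s} with hEdef
  have hEm : ∀ s, MeasurableSet (E s) := fun s => hXm (measurableSet_singleton _)
  have hf_nonneg : ∀ s i, (0:ℝ) ≤ f s i := by
    intro s i; simp only [hf]; split <;> norm_num
  have hfinj : Function.Injective f := by
    intro s t hst
    funext k
    have := congrFun hst k
    simp only [hf] at this
    cases hs : s k <;> cases ht : t k <;> simp [hs, ht] at this ⊢ <;> norm_num at this
  have hpt : ∀ (i j : Fin d) (ω : Ω), X ω i * X ω j
      = ∑ s : Fin d → Bool, (E s).indicator (fun _ => f s i * f s j) ω := by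
    intro i j ω
    have hsw : X ω = f (fun k => decide (X ω k = 1)) := by
      funext k
      rcases hX01 ω k with h | h <;> simp [hf, h]
    rw [Finset.sum_eq_single (fun k => decide (X ω k = 1))]
    · have hmem : ω ∈ E (fun k => decide (X ω k = 1)) := by
        simp only [hEdef, Set.mem_preimage, Set.mem_singleton_iff]
        exact hsw
      rw [Set.indicator_of_mem hmem]
      rw [show X ω i = f (fun k => decide (X ω k = 1)) i from congrFun hsw i,
          show X ω j = f (fun k => decide (X ω k = 1)) j from congrFun hsw j]
    · intro s _ hs
      apply Set.indicator_of_notMem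
      simp only [hEdef, Set.mem_preimage, Set.mem_singleton_iff]
      intro hXs
      exact hs (hfinj (hXs.symm.trans hsw))
    · intro h; exact absurd (Finset.mem_univ _) h
  have hInt : ∀ i j, ∫ ω, X ω i * X ω j ∂μ
      = ∑ s : Fin d → Bool, (μ (E s)).toReal * (f s i * f s j) := by
    intro i j
    rw [show (fun ω => X ω i * X ω j)
        = fun ω => ∑ s : Fin d → Bool, (E s).indicator (fun _ => f s i * f s j) ω
        from funext (hpt i j)]
    rw [integral_finset_sum]
    · refine Finset.sum_congr rfl fun s _ => ?_
      rw [integral_indicator_const _ (hEm s), smul_eq_mul]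
      rfl
    · intro s _
      exact (integrable_const _).indicator (hEm s)
  let e : (Fin d → Bool) ≃ Fin (Fintype.card (Fin d → Bool)) := Fintype.equivFin _
  refine ⟨Fintype.card (Fin d → Bool),
    Matrix.of fun i k => Real.sqrt (μ (E (e.symm k))).toReal * f (e.symm k) i, ?_, ?_⟩
  · intro i k
    exact mul_nonneg (Real.sqrt_nonneg _) (hf_nonneg _ _)
  · ext i j
    rw [hBij i j, hInt i j, Matrix.mul_apply]
    rw [← e.symm.sum_comp (fun s => (μ (E s)).toReal * (f s i * f s j))]
    refine Finset.sum_congr rfl fun k _ => ?_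
    simp only [Matrix.transpose_apply, Matrix.of_apply]
    have h := Real.mul_self_sqrt (ENNReal.toReal_nonneg (a := μ (E (e.symm k))))
    ring_nf
    rw [Real.sq_sqrt ENNReal.toReal_nonneg]
    ring
end
end

section
/- The set B_d^* = { a·B : a ≥ 0, B a d×d Bernoulli-compatible matrix } is a convex cone (closed under nonnegative scalar multiples and under addition) and is closed under the Hadamard (entrywise) product; thus (B_d^*, +, ∘) is a commutative semiring (Proposition 2.7). -/
open MeasureTheory ProbabilityTheory Filter Set

noncomputable section

/-- `B_d^*`, the convex cone generated by the Bernoulli-compatible matrices. -/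
def InBdStar {d : ℕ} (M : Matrix (Fin d) (Fin d) ℝ) : Prop :=
  ∃ (a : ℝ) (B : Matrix (Fin d) (Fin d) ℝ), 0 ≤ a ∧ IsBernoulliCompatible B ∧ M = a • B

lemma bern_zero {d : ℕ} : IsBernoulliCompatible (0 : Matrix (Fin d) (Fin d) ℝ) := by
  refine ⟨Unit, inferInstance, Measure.dirac (), inferInstance,
    fun _ _ => 0, measurable_const, fun ω i => Or.inl rfl, fun i j => by simp⟩

lemma bern_mix {d : ℕ} {B₁ B₂ : Matrix (Fin d) (Fin d) ℝ} (t : ℝ) (ht0 : 0 ≤ t) (ht1 : t ≤ 1)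
    (h₁ : IsBernoulliCompatible B₁) (h₂ : IsBernoulliCompatible B₂) :
    IsBernoulliCompatible (t • B₁ + (1 - t) • B₂) := by
  obtain ⟨Ω₁, m₁, μ₁, hp₁, X₁, hX₁m, hX₁v, hX₁e⟩ := h₁
  obtain ⟨Ω₂, m₂, μ₂, hp₂, X₂, hX₂m, hX₂v, hX₂e⟩ := h₂
  set ν₁ : Measure (Ω₁ ⊕ Ω₂) := ENNReal.ofReal t • μ₁.map (Sum.inl : Ω₁ → Ω₁ ⊕ Ω₂) with hν₁
  set ν₂ : Measure (Ω₁ ⊕ Ω₂) := ENNReal.ofReal (1 - t) • μ₂.map (Sum.inr : Ω₂ → Ω₁ ⊕ Ω₂) with hν₂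
  have hmap₁ : (μ₁.map (Sum.inl : Ω₁ → Ω₁ ⊕ Ω₂)) Set.univ = 1 := by
    rw [Measure.map_apply measurable_inl MeasurableSet.univ]; simp
  have hmap₂ : (μ₂.map (Sum.inr : Ω₂ → Ω₁ ⊕ Ω₂)) Set.univ = 1 := by
    rw [Measure.map_apply measurable_inr MeasurableSet.univ]; simp
  have hfin₁ : IsFiniteMeasure ν₁ := by
    constructor
    simp only [hν₁, Measure.smul_apply, smul_eq_mul, hmap₁, mul_one]
    exact ENNReal.ofReal_lt_top
  have hfin₂ : IsFiniteMeasure ν₂ := by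
    constructor
    simp only [hν₂, Measure.smul_apply, smul_eq_mul, hmap₂, mul_one]
    exact ENNReal.ofReal_lt_top
  have hprob : IsProbabilityMeasure (ν₁ + ν₂) := by
    constructor
    simp only [Measure.add_apply, hν₁, hν₂, Measure.smul_apply, smul_eq_mul,
      hmap₁, hmap₂, mul_one]
    rw [← ENNReal.ofReal_add ht0 (by linarith)]
    norm_num
  set X : Ω₁ ⊕ Ω₂ → Fin d → ℝ := Sum.elim X₁ X₂ with hX
  have hXm : Measurable X := hX₁m.sumElim hX₂m
  have hXv : ∀ ω i, X ω i = 0 ∨ X ω i = 1 := by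
    rintro (ω | ω) i
    · exact hX₁v ω i
    · exact hX₂v ω i
  refine ⟨Ω₁ ⊕ Ω₂, inferInstance, ν₁ + ν₂, hprob, X, hXm, hXv, fun i j => ?_⟩
  set f : Ω₁ ⊕ Ω₂ → ℝ := fun ω => X ω i * X ω j with hf
  have hfm : Measurable f :=
    ((measurable_pi_apply i).comp hXm).mul ((measurable_pi_apply j).comp hXm)
  have hbound : ∀ ω, ‖f ω‖ ≤ 1 := by
    intro ω
    rcases hXv ω i with h | h <;> rcases hXv ω j with h' | h' <;>
      simp [hf, h, h']
  have hint₁ : Integrable f ν₁ :=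
    (integrable_const 1).mono' hfm.aestronglyMeasurable (ae_of_all _ hbound)
  have hint₂ : Integrable f ν₂ :=
    (integrable_const 1).mono' hfm.aestronglyMeasurable (ae_of_all _ hbound)
  have e₁ : ∫ ω, f ω ∂ν₁ = t * ∫ ω, X₁ ω i * X₁ ω j ∂μ₁ := by
    rw [hν₁, integral_smul_measure, ENNReal.toReal_ofReal ht0,
      integral_map measurable_inl.aemeasurable hfm.aestronglyMeasurable]
    rfl
  have e₂ : ∫ ω, f ω ∂ν₂ = (1 - t) * ∫ ω, X₂ ω i * X₂ ω j ∂μ₂ := by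
    rw [hν₂, integral_smul_measure, ENNReal.toReal_ofReal (by linarith),
      integral_map measurable_inr.aemeasurable hfm.aestronglyMeasurable]
    rfl
  have : ∫ ω, f ω ∂(ν₁ + ν₂) = ∫ ω, f ω ∂ν₁ + ∫ ω, f ω ∂ν₂ :=
    integral_add_measure hint₁ hint₂
  rw [show (∫ ω, X ω i * X ω j ∂(ν₁ + ν₂)) = ∫ ω, f ω ∂(ν₁ + ν₂) from rfl, this, e₁, e₂,
    ← hX₁e, ← hX₂e]
  simp [Matrix.add_apply, Matrix.smul_apply, smul_eq_mul]

lemma bern_prod {d : ℕ} {B₁ B₂ : Matrix (Fin d) (Fin d) ℝ}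
    (h₁ : IsBernoulliCompatible B₁) (h₂ : IsBernoulliCompatible B₂) :
    IsBernoulliCompatible (Matrix.of fun i j => B₁ i j * B₂ i j) := by
  obtain ⟨Ω₁, m₁, μ₁, hp₁, X₁, hX₁m, hX₁v, hX₁e⟩ := h₁
  obtain ⟨Ω₂, m₂, μ₂, hp₂, X₂, hX₂m, hX₂v, hX₂e⟩ := h₂
  set X : Ω₁ × Ω₂ → Fin d → ℝ := fun ω i => X₁ ω.1 i * X₂ ω.2 i with hX
  have hXm : Measurable X := by
    apply measurable_pi_lambda
    intro i
    exact ((measurable_pi_apply i).comp (hX₁m.comp measurable_fst)).mul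
      ((measurable_pi_apply i).comp (hX₂m.comp measurable_snd))
  refine ⟨Ω₁ × Ω₂, inferInstance, μ₁.prod μ₂, inferInstance, X, hXm, ?_, fun i j => ?_⟩
  · intro ω i
    rcases hX₁v ω.1 i with h | h <;> rcases hX₂v ω.2 i with h' | h' <;>
      simp [hX, h, h']
  · have : (∫ ω, X ω i * X ω j ∂(μ₁.prod μ₂)) =
        ∫ ω : Ω₁ × Ω₂, (X₁ ω.1 i * X₁ ω.1 j) * (X₂ ω.2 i * X₂ ω.2 j) ∂(μ₁.prod μ₂) := by
      apply integral_congr_ae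
      filter_upwards with ω
      simp only [hX]; ring
    rw [this, integral_prod_mul (fun ω₁ => X₁ ω₁ i * X₁ ω₁ j)
      (fun ω₂ => X₂ ω₂ i * X₂ ω₂ j), ← hX₁e, ← hX₂e]
    simp

/-- Proposition 2.7: `B_d^*` is a convex cone (closed under nonnegative scalar multiplication
and addition) and is closed under the Hadamard product, so `(B_d^*, +, ∘)` is a commutative
semiring. -/
theorem BdStar_cone_semiring (d : ℕ) :
    (∀ (a : ℝ) (M : Matrix (Fin d) (Fin d) ℝ), 0 ≤ a → InBdStar M → InBdStar (a • M)) ∧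
    (∀ M₁ M₂ : Matrix (Fin d) (Fin d) ℝ, InBdStar M₁ → InBdStar M₂ → InBdStar (M₁ + M₂)) ∧
    (∀ M₁ M₂ : Matrix (Fin d) (Fin d) ℝ, InBdStar M₁ → InBdStar M₂ →
      InBdStar (Matrix.of fun i j => M₁ i j * M₂ i j)) := by
  refine ⟨?_, ?_, ?_⟩
  · rintro a M ha ⟨a', B, ha', hB, rfl⟩
    exact ⟨a * a', B, mul_nonneg ha ha', hB, smul_smul a a' B⟩
  · rintro M₁ M₂ ⟨a₁, B₁, ha₁, hB₁, rfl⟩ ⟨a₂, B₂, ha₂, hB₂, rfl⟩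
    by_cases hs : a₁ + a₂ = 0
    · have h1 : a₁ = 0 := by linarith
      have h2 : a₂ = 0 := by linarith
      exact ⟨0, B₁, le_refl 0, hB₁, by simp [h1, h2]⟩
    · have hspos : 0 < a₁ + a₂ := lt_of_le_of_ne (by linarith) (Ne.symm hs)
      set t : ℝ := a₁ / (a₁ + a₂) with htdef
      have ht0 : 0 ≤ t := div_nonneg ha₁ hspos.le
      have ht1 : t ≤ 1 := by
        rw [htdef, div_le_one hspos]; linarith
      refine ⟨a₁ + a₂, t • B₁ + (1 - t) • B₂, hspos.le, bern_mix t ht0 ht1 hB₁ hB₂, ?_⟩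
      have h1t : 1 - t = a₂ / (a₁ + a₂) := by
        rw [htdef, eq_div_iff hs, sub_mul, one_mul, div_mul_cancel₀ _ hs]; ring
      ext i j
      simp only [Matrix.add_apply, Matrix.smul_apply, smul_eq_mul, htdef, h1t]
      field_simp
      ring
  · rintro M₁ M₂ ⟨a₁, B₁, ha₁, hB₁, rfl⟩ ⟨a₂, B₂, ha₂, hB₂, rfl⟩
    refine ⟨a₁ * a₂, Matrix.of fun i j => B₁ i j * B₂ i j,
      mul_nonneg ha₁ ha₂, bern_prod hB₁ hB₂, ?_⟩
    ext i j
    simp only [Matrix.of_apply, Matrix.smul_apply, smul_eq_mul]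
    ring
end
end

section
/- If Λ_1 and Λ_2 are d×d tail-dependence matrices and t ∈ [0,1], then t·Λ_1 + (1−t)·Λ_2 is a tail-dependence matrix; that is, the set T_d of d×d tail-dependence matrices is convex. Moreover, the identity matrix I_d and the all-ones matrix (1)_{d×d} are tail-dependence matrices (Proposition 3.3(ii),(iii)). -/
open MeasureTheory ProbabilityTheory Filter Set

noncomputable section

instance : IsProbabilityMeasure stdUniform := by
  constructor
  simp [stdUniform, Real.volume_Icc]

lemma stdUniform_Iic {u : ℝ} (h0 : 0 ≤ u) (h1 : u ≤ 1) :
    stdUniform (Set.Iic u) = ENNReal.ofReal u := by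
  rw [stdUniform, Measure.restrict_apply measurableSet_Iic]
  have : Set.Iic u ∩ Set.Icc 0 1 = Set.Icc 0 u := by
    ext x
    simp only [mem_inter_iff, mem_Iic, mem_Icc]
    constructor
    · rintro ⟨h, h2, _⟩; exact ⟨h2, h⟩
    · rintro ⟨h2, h⟩; exact ⟨h, h2, h.trans h1⟩
  rw [this, Real.volume_Icc, sub_zero]


lemma eventually_Ioo : ∀ᶠ u : ℝ in nhdsWithin 0 (Set.Ioi 0), 0 < u ∧ u < 1 := by
  filter_upwards [self_mem_nhdsWithin,
    eventually_nhdsWithin_of_eventually_nhds (eventually_lt_nhds (by norm_num : (0:ℝ) < 1))]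
    with u hu hu1
  exact ⟨hu, hu1⟩

lemma ones_mat (d : ℕ) :
    IsTailDependenceMatrix (Matrix.of fun (_ _ : Fin d) => (1:ℝ)) := by
  refine ⟨ℝ, inferInstance, stdUniform, inferInstance, fun ω _ => ω, ?_, ?_, ?_⟩
  · exact measurable_pi_lambda _ (fun _ => measurable_id)
  · intro i
    simp [Measure.map_id]
  · intro i j
    unfold HasTailDepCoeff
    have : ∀ᶠ u : ℝ in nhdsWithin 0 (Set.Ioi 0),
        (stdUniform {ω : ℝ | ω ≤ u ∧ ω ≤ u}).toReal / u = 1 := by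
      filter_upwards [eventually_Ioo] with u hu
      have : {ω : ℝ | ω ≤ u ∧ ω ≤ u} = Set.Iic u := by ext x; simp [and_self]
      rw [this, stdUniform_Iic hu.1.le hu.2.le, ENNReal.toReal_ofReal hu.1.le,
        div_self hu.1.ne']
    have h2 : Tendsto (fun _ : ℝ => (1:ℝ)) (nhdsWithin 0 (Set.Ioi 0)) (nhds 1) :=
      tendsto_const_nhds
    simpa [Matrix.of_apply] using h2.congr' (this.mono fun u h => h.symm)

lemma id_mat (d : ℕ) :
    IsTailDependenceMatrix (1 : Matrix (Fin d) (Fin d) ℝ) := by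
  classical
  refine ⟨Fin d → ℝ, inferInstance, Measure.pi (fun _ => stdUniform), inferInstance,
    id, measurable_id, ?_, ?_⟩
  · intro i
    ext s hs
    have : (fun ω : Fin d → ℝ => id ω i) = Function.eval i := rfl
    rw [this, Measure.map_apply (measurable_pi_apply i) hs, Set.eval_preimage,
      Measure.pi_pi]
    rw [Finset.prod_eq_single i (fun b _ hb => by simp [Function.update_of_ne hb])
      (by simp)]
    simp
  · intro i j
    unfold HasTailDepCoeff
    by_cases hij : i = j
    · subst hij
      have key : ∀ᶠ u : ℝ in nhdsWithin 0 (Set.Ioi 0),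
          ((Measure.pi (fun _ : Fin d => stdUniform))
            {ω | id ω i ≤ u ∧ id ω i ≤ u}).toReal / u = 1 := by
        filter_upwards [eventually_Ioo] with u hu
        have hset : {ω : Fin d → ℝ | id ω i ≤ u ∧ id ω i ≤ u}
            = Function.eval i ⁻¹' Set.Iic u := by
          ext x; simp [and_self, Function.eval]
        rw [hset, Set.eval_preimage, Measure.pi_pi,
          Finset.prod_eq_single i (fun b _ hb => by simp [Function.update_of_ne hb])
            (by simp)]
        simp only [Function.update_self]
        rw [stdUniform_Iic hu.1.le hu.2.le, ENNReal.toReal_ofReal hu.1.le,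
          div_self hu.1.ne']
      simpa using (tendsto_const_nhds : Tendsto (fun _ : ℝ => (1:ℝ))
        (nhdsWithin 0 (Set.Ioi 0)) (nhds 1)).congr' (key.mono fun u h => h.symm)
    · have key : ∀ᶠ u : ℝ in nhdsWithin 0 (Set.Ioi 0),
          ((Measure.pi (fun _ : Fin d => stdUniform))
            {ω | id ω i ≤ u ∧ id ω j ≤ u}).toReal / u = u := by
        filter_upwards [eventually_Ioo] with u hu
        set B : Fin d → Set ℝ := fun k =>
          if k = i then Set.Iic u else if k = j then Set.Iic u else Set.univ with hB
        have hset : {ω : Fin d → ℝ | id ω i ≤ u ∧ id ω j ≤ u} = Set.pi Set.univ B := by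
          ext x
          simp only [mem_setOf_eq, Set.mem_pi, Set.mem_univ, forall_true_left, id_eq, hB]
          constructor
          · rintro ⟨h1, h2⟩ k
            by_cases hk : k = i
            · subst hk; simp [h1]
            · by_cases hk2 : k = j
              · subst hk2; simp [hk, h2]
              · simp [hk, hk2]
          · intro h
            constructor
            · have := h i; simpa using this
            · have := h j; simpa [hij, Ne.symm hij] using this
        rw [hset, Measure.pi_pi]
        have hprod : ∏ k, stdUniform (B k)
            = ENNReal.ofReal u * ENNReal.ofReal u := by
          rw [← Finset.mul_prod_erase Finset.univ _ (Finset.mem_univ i),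
            ← Finset.mul_prod_erase _ _
              (Finset.mem_erase.2 ⟨Ne.symm hij, Finset.mem_univ j⟩)]
          have h1 : stdUniform (B i) = ENNReal.ofReal u := by
            simp [hB, stdUniform_Iic hu.1.le hu.2.le]
          have h2 : stdUniform (B j) = ENNReal.ofReal u := by
            simp [hB, Ne.symm hij, stdUniform_Iic hu.1.le hu.2.le]
          have h3 : ∏ k ∈ (Finset.univ.erase i).erase j, stdUniform (B k) = 1 := by
            apply Finset.prod_eq_one
            intro k hk
            have hk1 : k ≠ j := (Finset.mem_erase.1 hk).1
            have hk2 : k ≠ i := (Finset.mem_erase.1 (Finset.mem_erase.1 hk).2).1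
            simp [hB, hk1, hk2]
          rw [h1, h2, h3, mul_one]
        rw [hprod, ← ENNReal.ofReal_mul hu.1.le, ENNReal.toReal_ofReal
          (mul_nonneg hu.1.le hu.1.le), mul_div_assoc, div_self hu.1.ne', mul_one]
      have h0 : (1 : Matrix (Fin d) (Fin d) ℝ) i j = 0 := Matrix.one_apply_ne hij
      rw [h0]
      have : Tendsto (fun u : ℝ => u) (nhdsWithin 0 (Set.Ioi 0)) (nhds 0) :=
        tendsto_id.mono_left nhdsWithin_le_nhds
      exact this.congr' (key.mono fun u h => h.symm)

lemma convex_part {d : ℕ} (Λ₁ Λ₂ : Matrix (Fin d) (Fin d) ℝ)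
    (h1 : IsTailDependenceMatrix Λ₁) (h2 : IsTailDependenceMatrix Λ₂)
    (t : ℝ) (ht : t ∈ Set.Icc (0:ℝ) 1) :
    IsTailDependenceMatrix (t • Λ₁ + (1 - t) • Λ₂) := by
  obtain ⟨ht0, ht1⟩ := ht
  have hs0 : (0:ℝ) ≤ 1 - t := by linarith
  obtain ⟨Ω₁, m₁, μ₁, hp₁, Y₁, hY₁m, hY₁u, hY₁t⟩ := h1
  obtain ⟨Ω₂, m₂, μ₂, hp₂, Y₂, hY₂m, hY₂u, hY₂t⟩ := h2
  set ν₁ : Measure (Ω₁ ⊕ Ω₂) := μ₁.map Sum.inl with hν₁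
  set ν₂ : Measure (Ω₁ ⊕ Ω₂) := μ₂.map Sum.inr with hν₂
  have hν₁p : IsProbabilityMeasure ν₁ := Measure.isProbabilityMeasure_map measurable_inl.aemeasurable
  have hν₂p : IsProbabilityMeasure ν₂ := Measure.isProbabilityMeasure_map measurable_inr.aemeasurable
  set μ : Measure (Ω₁ ⊕ Ω₂) :=
    ENNReal.ofReal t • ν₁ + ENNReal.ofReal (1 - t) • ν₂ with hμ
  have hofsum : ENNReal.ofReal t + ENNReal.ofReal (1 - t) = 1 := by
    rw [← ENNReal.ofReal_add ht0 hs0]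
    norm_num
  have hμp : IsProbabilityMeasure μ := by
    constructor
    simp only [hμ, Measure.add_apply, Measure.smul_apply, smul_eq_mul, measure_univ,
      mul_one]
    exact hofsum
  set Y : Ω₁ ⊕ Ω₂ → Fin d → ℝ := Sum.elim Y₁ Y₂ with hY
  have hYm : Measurable Y := hY₁m.sumElim hY₂m
  refine ⟨Ω₁ ⊕ Ω₂, inferInstance, μ, hμp, Y, hYm, ?_, ?_⟩
  · intro i
    have hfm : Measurable (fun ω => Y ω i) := (measurable_pi_apply i).comp hYm
    rw [hμ, Measure.map_add _ _ hfm, Measure.map_smul, Measure.map_smul,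
      hν₁, hν₂, Measure.map_map hfm measurable_inl, Measure.map_map hfm measurable_inr]
    have e1 : (fun ω => Y ω i) ∘ Sum.inl = fun ω₁ => Y₁ ω₁ i := rfl
    have e2 : (fun ω => Y ω i) ∘ Sum.inr = fun ω₂ => Y₂ ω₂ i := rfl
    rw [e1, e2, hY₁u i, hY₂u i, ← add_smul, hofsum, one_smul]
  · intro i j
    unfold HasTailDepCoeff
    have hmS : ∀ u : ℝ, MeasurableSet {ω : Ω₁ ⊕ Ω₂ | Y ω i ≤ u ∧ Y ω j ≤ u} := by
      intro u
      exact (((measurable_pi_apply i).comp hYm) measurableSet_Iic).inter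
        (((measurable_pi_apply j).comp hYm) measurableSet_Iic)
    have key : ∀ u : ℝ,
        (μ {ω | Y ω i ≤ u ∧ Y ω j ≤ u}).toReal
          = t * (μ₁ {ω | Y₁ ω i ≤ u ∧ Y₁ ω j ≤ u}).toReal
            + (1 - t) * (μ₂ {ω | Y₂ ω i ≤ u ∧ Y₂ ω j ≤ u}).toReal := by
      intro u
      have hpre1 : Sum.inl ⁻¹' {ω : Ω₁ ⊕ Ω₂ | Y ω i ≤ u ∧ Y ω j ≤ u}
          = {ω : Ω₁ | Y₁ ω i ≤ u ∧ Y₁ ω j ≤ u} := rfl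
      have hpre2 : Sum.inr ⁻¹' {ω : Ω₁ ⊕ Ω₂ | Y ω i ≤ u ∧ Y ω j ≤ u}
          = {ω : Ω₂ | Y₂ ω i ≤ u ∧ Y₂ ω j ≤ u} := rfl
      rw [hμ, Measure.add_apply, Measure.smul_apply, Measure.smul_apply, smul_eq_mul,
        smul_eq_mul, hν₁, hν₂, Measure.map_apply measurable_inl (hmS u),
        Measure.map_apply measurable_inr (hmS u), hpre1, hpre2,
        ENNReal.toReal_add, ENNReal.toReal_mul, ENNReal.toReal_mul,
        ENNReal.toReal_ofReal ht0, ENNReal.toReal_ofReal hs0]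
      · exact ENNReal.mul_ne_top ENNReal.ofReal_ne_top (measure_ne_top _ _)
      · exact ENNReal.mul_ne_top ENNReal.ofReal_ne_top (measure_ne_top _ _)
    have htend : Tendsto (fun u : ℝ =>
        t * ((μ₁ {ω | Y₁ ω i ≤ u ∧ Y₁ ω j ≤ u}).toReal / u)
          + (1 - t) * ((μ₂ {ω | Y₂ ω i ≤ u ∧ Y₂ ω j ≤ u}).toReal / u))
        (nhdsWithin 0 (Set.Ioi 0)) (nhds (t * Λ₁ i j + (1 - t) * Λ₂ i j)) :=
      ((hY₁t i j).const_mul t).add ((hY₂t i j).const_mul (1 - t))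
    have hentry : (t • Λ₁ + (1 - t) • Λ₂) i j = t * Λ₁ i j + (1 - t) * Λ₂ i j := by
      simp [Matrix.add_apply, Matrix.smul_apply, smul_eq_mul]
    rw [hentry]
    refine htend.congr fun u => ?_
    rw [key u]
    ring

/-- Proposition 3.3(ii),(iii): the set of tail-dependence matrices is convex, and both the
identity matrix and the all-ones matrix are tail-dependence matrices. -/
theorem tail_dependence_convex_id_ones (d : ℕ) :
    (∀ (Λ₁ Λ₂ : Matrix (Fin d) (Fin d) ℝ), IsTailDependenceMatrix Λ₁ →
      IsTailDependenceMatrix Λ₂ → ∀ t ∈ Set.Icc (0:ℝ) 1,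
        IsTailDependenceMatrix (t • Λ₁ + (1 - t) • Λ₂)) ∧
    IsTailDependenceMatrix (1 : Matrix (Fin d) (Fin d) ℝ) ∧
    IsTailDependenceMatrix (Matrix.of fun (_ _ : Fin d) => (1:ℝ)) := by
  exact ⟨fun Λ₁ Λ₂ h1 h2 t ht => convex_part Λ₁ Λ₂ h1 h2 t ht, id_mat d, ones_mat d⟩
end
end

section
/- For any k ∈ ℕ and any d×d tail-dependence matrices Λ_1, ..., Λ_k, the Hadamard (entrywise) product Λ_1 ∘ ⋯ ∘ Λ_k is a tail-dependence matrix (Proposition 3.4). -/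
open MeasureTheory ProbabilityTheory Filter Set

noncomputable section

instance inst_s9 : IsProbabilityMeasure stdUniform := by
  constructor
  rw [stdUniform, Measure.restrict_apply_univ, Real.volume_Icc]
  norm_num


lemma stdUniform_Iic_s9 {s : ℝ} (hs : 0 ≤ s) :
    stdUniform (Set.Iic s) = ENNReal.ofReal (min s 1) := by
  rw [stdUniform, Measure.restrict_apply measurableSet_Iic]
  have : Set.Iic s ∩ Set.Icc (0:ℝ) 1 = Set.Icc 0 (min s 1) := by
    ext x
    simp only [Set.mem_inter_iff, Set.mem_Iic, Set.mem_Icc, le_min_iff]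
    tauto
  rw [this, Real.volume_Icc]
  congr 1
  simp
lemma ones_tdm {d : ℕ} : IsTailDependenceMatrix (Matrix.of fun _ _ : Fin d => (1:ℝ)) := by
  refine ⟨ℝ, inferInstance, stdUniform, inferInstance, fun ω _ => ω, ?_, ?_, ?_⟩
  · exact measurable_pi_lambda _ fun _ => measurable_id
  · intro i
    simp [Measure.map_id]
  · intro i j
    unfold HasTailDepCoeff
    have hev : ∀ᶠ u in nhdsWithin (0:ℝ) (Set.Ioi 0),
        (stdUniform {ω : ℝ | ω ≤ u ∧ ω ≤ u}).toReal / u = 1 := by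
      filter_upwards [self_mem_nhdsWithin,
        eventually_nhdsWithin_of_eventually_nhds (eventually_lt_nhds zero_lt_one)] with u hu hu1
      have hu0 : (0:ℝ) < u := hu
      have : {ω : ℝ | ω ≤ u ∧ ω ≤ u} = Set.Iic u := by ext; simp [and_self]
      rw [this, stdUniform_Iic_s9 hu0.le, min_eq_left hu1.le, ENNReal.toReal_ofReal hu0.le,
        div_self hu0.ne']
    exact tendsto_const_nhds.congr' (hev.mono fun u h => h.symm)
lemma sqrt_tendsto_within :
    Tendsto Real.sqrt (nhdsWithin (0:ℝ) (Set.Ioi 0)) (nhdsWithin (0:ℝ) (Set.Ioi 0)) := by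
  apply tendsto_nhdsWithin_of_tendsto_nhds_of_eventually_within
  · have h0 : Tendsto Real.sqrt (nhds 0) (nhds 0) := by
      simpa using Real.continuous_sqrt.tendsto 0
    exact h0.mono_left nhdsWithin_le_nhds
  · filter_upwards [self_mem_nhdsWithin] with u hu
    exact Real.sqrt_pos.mpr hu
lemma hadamard_two {d : ℕ} {A B : Matrix (Fin d) (Fin d) ℝ}
    (hA : IsTailDependenceMatrix A) (hB : IsTailDependenceMatrix B) :
    IsTailDependenceMatrix (Matrix.of fun i j => A i j * B i j) := by
  obtain ⟨Ω₁, m₁, μ₁, hμ₁, Y₁, hY₁, hmap₁, htd₁⟩ := hA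
  obtain ⟨Ω₂, m₂, μ₂, hμ₂, Y₂, hY₂, hmap₂, htd₂⟩ := hB
  refine ⟨Ω₁ × Ω₂, inferInstance, μ₁.prod μ₂, inferInstance,
    fun ω i => (max (max (Y₁ ω.1 i) (Y₂ ω.2 i)) 0) ^ 2, ?_, ?_, ?_⟩
  · refine measurable_pi_lambda _ fun i => ?_
    have h1 : Measurable fun ω : Ω₁ × Ω₂ => Y₁ ω.1 i :=
      ((measurable_pi_apply i).comp hY₁).comp measurable_fst
    have h2 : Measurable fun ω : Ω₁ × Ω₂ => Y₂ ω.2 i :=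
      ((measurable_pi_apply i).comp hY₂).comp measurable_snd
    exact ((h1.max h2).max measurable_const).pow_const 2
  · intro i
    have h1 : Measurable fun ω : Ω₁ × Ω₂ => Y₁ ω.1 i :=
      ((measurable_pi_apply i).comp hY₁).comp measurable_fst
    have h2 : Measurable fun ω : Ω₁ × Ω₂ => Y₂ ω.2 i :=
      ((measurable_pi_apply i).comp hY₂).comp measurable_snd
    have hZ : Measurable fun ω : Ω₁ × Ω₂ => (max (max (Y₁ ω.1 i) (Y₂ ω.2 i)) 0) ^ 2 :=
      ((h1.max h2).max measurable_const).pow_const 2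
    -- compute marginal CDFs of Y₁ i, Y₂ i
    have hm₁ : Measurable fun ω : Ω₁ => Y₁ ω i := (measurable_pi_apply i).comp hY₁
    have hm₂ : Measurable fun ω : Ω₂ => Y₂ ω i := (measurable_pi_apply i).comp hY₂
    have hc₁ : ∀ s : ℝ, μ₁ {ω | Y₁ ω i ≤ s} = stdUniform (Set.Iic s) := by
      intro s
      rw [← hmap₁ i, Measure.map_apply hm₁ measurableSet_Iic]
      rfl
    have hc₂ : ∀ s : ℝ, μ₂ {ω | Y₂ ω i ≤ s} = stdUniform (Set.Iic s) := by
      intro s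
      rw [← hmap₂ i, Measure.map_apply hm₂ measurableSet_Iic]
      rfl
    refine Measure.ext_of_Iic _ _ fun t => ?_
    rw [Measure.map_apply hZ measurableSet_Iic]
    rcases lt_or_ge t 0 with ht | ht
    · have he : (fun ω : Ω₁ × Ω₂ => (max (max (Y₁ ω.1 i) (Y₂ ω.2 i)) 0) ^ 2) ⁻¹'
          Set.Iic t = ∅ := by
        ext ω
        simp only [Set.mem_preimage, Set.mem_Iic, Set.mem_empty_iff_false, iff_false, not_le]
        exact lt_of_lt_of_le ht (sq_nonneg _)
      rw [he]
      have hie : Set.Iic t ∩ Set.Icc (0:ℝ) 1 = ∅ := by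
        ext x
        simp only [Set.mem_inter_iff, Set.mem_Iic, Set.mem_Icc, Set.mem_empty_iff_false,
          iff_false]
        rintro ⟨hx, hx0, -⟩
        linarith
      have : stdUniform (Set.Iic t) = 0 := by
        rw [stdUniform, Measure.restrict_apply measurableSet_Iic, hie, measure_empty]
      simp [this]
    · have hsq : (0:ℝ) ≤ Real.sqrt t := Real.sqrt_nonneg t
      have he : (fun ω : Ω₁ × Ω₂ => (max (max (Y₁ ω.1 i) (Y₂ ω.2 i)) 0) ^ 2) ⁻¹'
          Set.Iic t = {ω₁ | Y₁ ω₁ i ≤ Real.sqrt t} ×ˢ {ω₂ | Y₂ ω₂ i ≤ Real.sqrt t} := by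
        ext ω
        simp only [Set.mem_preimage, Set.mem_Iic, Set.mem_prod, Set.mem_setOf_eq]
        rw [← Real.le_sqrt (le_max_right _ _) ht, max_le_iff, max_le_iff]
        constructor
        · rintro ⟨⟨h1, h2⟩, _⟩; exact ⟨h1, h2⟩
        · rintro ⟨h1, h2⟩; exact ⟨⟨h1, h2⟩, hsq⟩
      rw [he, Measure.prod_prod, hc₁, hc₂, stdUniform_Iic_s9 hsq, stdUniform_Iic_s9 ht,
        ← ENNReal.ofReal_mul (by positivity)]
      congr 1
      rcases le_or_gt t 1 with h1 | h1
      · have hs1 : Real.sqrt t ≤ 1 := by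
          rw [show (1:ℝ) = Real.sqrt 1 by simp]; exact Real.sqrt_le_sqrt h1
        rw [min_eq_left hs1, min_eq_left h1, Real.mul_self_sqrt ht]
      · have hs1 : (1:ℝ) ≤ Real.sqrt t := by
          rw [show (1:ℝ) = Real.sqrt 1 by simp]; exact Real.sqrt_le_sqrt h1.le
        rw [min_eq_right hs1, min_eq_right h1.le, mul_one]
  · intro i j
    unfold HasTailDepCoeff
    have key : ∀ u : ℝ, 0 < u →
        (μ₁.prod μ₂) {ω : Ω₁ × Ω₂ |
            (max (max (Y₁ ω.1 i) (Y₂ ω.2 i)) 0) ^ 2 ≤ u ∧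
            (max (max (Y₁ ω.1 j) (Y₂ ω.2 j)) 0) ^ 2 ≤ u} =
          μ₁ {ω₁ | Y₁ ω₁ i ≤ Real.sqrt u ∧ Y₁ ω₁ j ≤ Real.sqrt u} *
          μ₂ {ω₂ | Y₂ ω₂ i ≤ Real.sqrt u ∧ Y₂ ω₂ j ≤ Real.sqrt u} := by
      intro u hu
      rw [← Measure.prod_prod]
      congr 1
      ext ω
      simp only [Set.mem_setOf_eq, Set.mem_prod]
      rw [← Real.le_sqrt (le_max_right _ _) hu.le, ← Real.le_sqrt (le_max_right _ _) hu.le,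
        max_le_iff, max_le_iff, max_le_iff, max_le_iff]
      have hsq : (0:ℝ) ≤ Real.sqrt u := Real.sqrt_nonneg u
      constructor
      · rintro ⟨⟨⟨h1, h2⟩, _⟩, ⟨⟨h3, h4⟩, _⟩⟩; exact ⟨⟨h1, h3⟩, h2, h4⟩
      · rintro ⟨⟨h1, h3⟩, h2, h4⟩; exact ⟨⟨⟨h1, h2⟩, hsq⟩, ⟨⟨h3, h4⟩, hsq⟩⟩
    have hlim := ((htd₁ i j).comp sqrt_tendsto_within).mul ((htd₂ i j).comp sqrt_tendsto_within)
    rw [show A i j * B i j = Matrix.of (fun i j => A i j * B i j) i j from rfl] at hlim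
    refine hlim.congr' ?_
    filter_upwards [self_mem_nhdsWithin] with u hu
    have hu0 : (0:ℝ) < u := hu
    have hfin₁ : μ₁ {ω₁ | Y₁ ω₁ i ≤ Real.sqrt u ∧ Y₁ ω₁ j ≤ Real.sqrt u} ≠ ⊤ :=
      measure_ne_top _ _
    simp only [Function.comp_apply]
    rw [key u hu0, ENNReal.toReal_mul]
    rw [div_mul_div_comm, Real.mul_self_sqrt hu0.le]

/-- Proposition 3.4: the Hadamard (entrywise) product of finitely many tail-dependence
matrices is a tail-dependence matrix. -/
theorem tail_dependence_hadamard_prod {d k : ℕ} (Λ : Fin k → Matrix (Fin d) (Fin d) ℝ)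
    (hΛ : ∀ l, IsTailDependenceMatrix (Λ l)) :
    IsTailDependenceMatrix (Matrix.of fun i j => ∏ l, Λ l i j) := by
  induction k with
  | zero =>
    have heq : (Matrix.of fun i j => ∏ l, Λ l i j) = Matrix.of fun _ _ : Fin d => (1:ℝ) := by
      ext i j; simp
    rw [heq]
    exact ones_tdm
  | succ n ih =>
    have heq : (Matrix.of fun i j => ∏ l, Λ l i j) =
        Matrix.of fun i j => Λ 0 i j *
          (Matrix.of fun i j => ∏ l : Fin n, Λ l.succ i j) i j := by
      ext i j
      simp [Fin.prod_univ_succ]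
    rw [heq]
    exact hadamard_two (hΛ 0) (ih (fun l => Λ l.succ) fun l => hΛ l.succ)
end
end

section
/- Every d×d tail-dependence matrix is completely positive (i.e., of the form A·Aᵀ for some matrix A with nonnegative entries), and hence positive semi-definite (Corollary 3.8). -/
open MeasureTheory ProbabilityTheory Filter Set

noncomputable section

/-- Corollary 3.8: every tail-dependence matrix is completely positive, hence positive
semi-definite. -/
theorem tail_dependence_completelyPositive {d : ℕ} (Λ : Matrix (Fin d) (Fin d) ℝ)
    (hΛ : IsTailDependenceMatrix Λ) :
    (∃ (m : ℕ) (A : Matrix (Fin d) (Fin m) ℝ), (∀ i j, 0 ≤ A i j) ∧ Λ = A * A.transpose) ∧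
    Λ.PosSemidef := by
  classical
  -- Step 0: extract the random vector
  obtain ⟨Ω, mΩ, μ, hμ, Y, hY, hmarg, htdc⟩ := hΛ
  have hYi : ∀ i, Measurable fun ω => Y ω i := fun i => hY.eval
  -- margins are uniform
  have hmargin : ∀ (i : Fin d) (u : ℝ), 0 ≤ u → u ≤ 1 →
      μ {ω | Y ω i ≤ u} = ENNReal.ofReal u := by
    intro i u hu0 hu1
    have h1 : {ω | Y ω i ≤ u} = (fun ω => Y ω i) ⁻¹' (Set.Iic u) := rfl
    rw [h1, ← Measure.map_apply (hYi i) measurableSet_Iic, hmarg i]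
    unfold stdUniform
    rw [Measure.restrict_apply measurableSet_Iic]
    have h2 : Set.Iic u ∩ Set.Icc 0 1 = Set.Icc 0 u := by
      ext x
      simp only [Set.mem_inter_iff, Set.mem_Iic, Set.mem_Icc]
      constructor
      · rintro ⟨h1, h2, h3⟩; exact ⟨h2, h1⟩
      · rintro ⟨h1, h2⟩; exact ⟨h2, h1, h2.trans hu1⟩
    rw [h2, Real.volume_Icc]
    norm_num
  -- the atoms of the indicator algebra
  set E : ℝ → Finset (Fin d) → Set Ω := fun u s => {ω | ∀ k, Y ω k ≤ u ↔ k ∈ s} with hE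
  have hEmeas : ∀ u s, MeasurableSet (E u s) := by
    intro u s
    have h1 : E u s = ⋂ k, {ω | Y ω k ≤ u ↔ k ∈ s} := by
      ext ω; simp [hE, Set.mem_iInter]
    rw [h1]
    refine MeasurableSet.iInter fun k => ?_
    by_cases hk : k ∈ s
    · have : {ω | Y ω k ≤ u ↔ k ∈ s} = {ω | Y ω k ≤ u} := by ext ω; simp [hk]
      rw [this]; exact measurableSet_le (hYi k) measurable_const
    · have : {ω | Y ω k ≤ u ↔ k ∈ s} = {ω | Y ω k ≤ u}ᶜ := by ext ω; simp [hk]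
      rw [this]; exact (measurableSet_le (hYi k) measurable_const).compl
  have hEsub : ∀ (u : ℝ) (s : Finset (Fin d)) (i : Fin d), i ∈ s →
      E u s ⊆ {ω | Y ω i ≤ u} := by
    intro u s i hi ω hω
    exact (hω i).2 hi
  -- decomposition of the joint tail event
  have hdecomp : ∀ (u : ℝ) (i j : Fin d),
      μ {ω | Y ω i ≤ u ∧ Y ω j ≤ u}
        = ∑ s ∈ Finset.univ.filter (fun s : Finset (Fin d) => i ∈ s ∧ j ∈ s), μ (E u s) := by
    intro u i j
    have hset : {ω | Y ω i ≤ u ∧ Y ω j ≤ u}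
        = ⋃ s ∈ Finset.univ.filter (fun s : Finset (Fin d) => i ∈ s ∧ j ∈ s), E u s := by
      ext ω
      simp only [Set.mem_setOf_eq, Set.mem_iUnion, Finset.mem_filter, Finset.mem_univ, true_and,
        hE, exists_prop]
      constructor
      · rintro ⟨hi, hj⟩
        exact ⟨Finset.univ.filter (fun k => Y ω k ≤ u), by simp [hi, hj], by simp⟩
      · rintro ⟨s, ⟨hi, hj⟩, hω⟩
        exact ⟨(hω i).2 hi, (hω j).2 hj⟩
    rw [hset]
    refine measure_biUnion_finset ?_ (fun s _ => hEmeas u s)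
    intro s _ t _ hst
    refine Set.disjoint_left.mpr fun ω hs ht => hst ?_
    ext k
    exact ((hs k).symm.trans (ht k))
  -- coefficients
  set c : ℝ → Finset (Fin d) → ℝ :=
    fun u s => if s = ∅ then 0 else (μ (E u s)).toReal / u with hc
  have hcmem : ∀ (u : ℝ), 0 < u → u ≤ 1 → ∀ s, c u s ∈ Set.Icc (0:ℝ) 1 := by
    intro u hu0 hu1 s
    rw [hc]
    by_cases hs : s = ∅
    · simp [hs]
    · simp only [hs, if_false]
      obtain ⟨i, hi⟩ := Finset.nonempty_iff_ne_empty.mpr hs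
      constructor
      · exact div_nonneg ENNReal.toReal_nonneg hu0.le
      · rw [div_le_one hu0]
        have h1 : μ (E u s) ≤ ENNReal.ofReal u := by
          rw [← hmargin i u hu0.le hu1]
          exact measure_mono (hEsub u s i hi)
        exact ENNReal.toReal_le_of_le_ofReal hu0.le h1
  -- matrix entries as nonnegative combinations of rank-one 0/1 matrices
  have hMform : ∀ (u : ℝ), 0 < u → ∀ i j : Fin d,
      (μ {ω | Y ω i ≤ u ∧ Y ω j ≤ u}).toReal / u
        = ∑ s : Finset (Fin d),
            c u s * ((if i ∈ s then (1:ℝ) else 0) * (if j ∈ s then (1:ℝ) else 0)) := by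
    intro u hu i j
    have hprod : ∀ s : Finset (Fin d),
        c u s * ((if i ∈ s then (1:ℝ) else 0) * (if j ∈ s then (1:ℝ) else 0))
          = if (i ∈ s ∧ j ∈ s) then c u s else 0 := by
      intro s
      by_cases hi : i ∈ s <;> by_cases hj : j ∈ s <;> simp [hi, hj]
    rw [hdecomp u i j]
    rw [ENNReal.toReal_sum (fun s _ => measure_ne_top μ _)]
    rw [Finset.sum_div]
    calc ∑ s ∈ Finset.univ.filter (fun s : Finset (Fin d) => i ∈ s ∧ j ∈ s),
            (μ (E u s)).toReal / u
        = ∑ s ∈ Finset.univ.filter (fun s : Finset (Fin d) => i ∈ s ∧ j ∈ s), c u s := by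
          refine Finset.sum_congr rfl fun s hs => ?_
          rw [Finset.mem_filter] at hs
          have hne : s ≠ ∅ := by
            intro h; rw [h] at hs; exact absurd hs.2.1 (Finset.notMem_empty i)
          rw [hc]; simp [hne]
      _ = ∑ s : Finset (Fin d), if (i ∈ s ∧ j ∈ s) then c u s else 0 := by
          rw [Finset.sum_filter]
      _ = _ := by
          refine Finset.sum_congr rfl fun s _ => (hprod s).symm
  -- a sequence decreasing to 0
  set u : ℕ → ℝ := fun n => 1 / ((n : ℝ) + 2) with hu
  have hu_pos : ∀ n, 0 < u n := by
    intro n; rw [hu]; positivity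
  have hu_le : ∀ n, u n ≤ 1 := by
    intro n; rw [hu]
    rw [div_le_one (by positivity)]
    have : (0:ℝ) ≤ (n:ℝ) + 1 := by positivity
    linarith
  have hu_tend : Tendsto u atTop (nhdsWithin 0 (Set.Ioi 0)) := by
    refine tendsto_nhdsWithin_of_tendsto_nhds_of_eventually_within _ ?_
      (Eventually.of_forall fun n => hu_pos n)
    have h1 : Tendsto (fun n : ℕ => (n : ℝ) + 2) atTop atTop :=
      tendsto_atTop_add_const_right _ _ tendsto_natCast_atTop_atTop
    simpa [hu, one_div, Pi.inv_def] using h1.inv_tendsto_atTop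
  -- the matrix entries converge to Λ
  have hMlim : ∀ i j : Fin d,
      Tendsto (fun n => ∑ s : Finset (Fin d),
          c (u n) s * ((if i ∈ s then (1:ℝ) else 0) * (if j ∈ s then (1:ℝ) else 0)))
        atTop (nhds (Λ i j)) := by
    intro i j
    have h1 := (htdc i j).comp hu_tend
    refine h1.congr fun n => ?_
    exact hMform (u n) (hu_pos n) i j
  -- compactness: extract a convergent subsequence of coefficients
  have hkey : ∃ a : Finset (Fin d) → ℝ, (∀ s, 0 ≤ a s) ∧
      ∀ i j : Fin d, Λ i j = ∑ s : Finset (Fin d),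
          a s * ((if i ∈ s then (1:ℝ) else 0) * (if j ∈ s then (1:ℝ) else 0)) := by
    have hK : IsCompact (Set.pi Set.univ (fun _ : Finset (Fin d) => Set.Icc (0:ℝ) 1)) :=
      isCompact_univ_pi fun _ => isCompact_Icc
    have hmem : ∀ n, (c (u n)) ∈ Set.pi Set.univ (fun _ : Finset (Fin d) => Set.Icc (0:ℝ) 1) :=
      fun n s _ => hcmem (u n) (hu_pos n) (hu_le n) s
    obtain ⟨a, haK, φ, hφ, hconv⟩ := hK.tendsto_subseq hmem
    refine ⟨a, fun s => (haK s (Set.mem_univ s)).1, fun i j => ?_⟩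
    have h1 : Tendsto (fun k => ∑ s : Finset (Fin d),
        c (u (φ k)) s * ((if i ∈ s then (1:ℝ) else 0) * (if j ∈ s then (1:ℝ) else 0)))
        atTop (nhds (Λ i j)) := (hMlim i j).comp hφ.tendsto_atTop
    have h2 : Tendsto (fun k => ∑ s : Finset (Fin d),
        c (u (φ k)) s * ((if i ∈ s then (1:ℝ) else 0) * (if j ∈ s then (1:ℝ) else 0)))
        atTop (nhds (∑ s : Finset (Fin d),
          a s * ((if i ∈ s then (1:ℝ) else 0) * (if j ∈ s then (1:ℝ) else 0)))) := by
      refine tendsto_finset_sum _ fun s _ => ?_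
      have h3 : Tendsto (fun k => c (u (φ k)) s) atTop (nhds (a s)) :=
        ((continuous_apply s).continuousAt.tendsto).comp hconv
      exact h3.mul_const _
    exact tendsto_nhds_unique h1 h2
  obtain ⟨a, ha0, haΛ⟩ := hkey
  -- build the nonnegative factorization
  set m := Fintype.card (Finset (Fin d)) with hm
  set e : Fin m ≃ Finset (Fin d) := (Fintype.equivFin (Finset (Fin d))).symm with he
  set A : Matrix (Fin d) (Fin m) ℝ :=
    fun i k => Real.sqrt (a (e k)) * (if i ∈ e k then 1 else 0) with hA
  have hA0 : ∀ i k, 0 ≤ A i k := by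
    intro i k
    rw [hA]
    refine mul_nonneg (Real.sqrt_nonneg _) ?_
    split <;> norm_num
  have hAA : Λ = A * A.transpose := by
    ext i j
    rw [Matrix.mul_apply]
    simp only [Matrix.transpose_apply]
    rw [haΛ i j]
    refine (Fintype.sum_equiv e _ _ fun k => ?_).symm
    rw [hA]
    have hs : Real.sqrt (a (e k)) * Real.sqrt (a (e k)) = a (e k) :=
      Real.mul_self_sqrt (ha0 _)
    calc Real.sqrt (a (e k)) * (if i ∈ e k then (1:ℝ) else 0) *
          (Real.sqrt (a (e k)) * (if j ∈ e k then (1:ℝ) else 0))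
        = (Real.sqrt (a (e k)) * Real.sqrt (a (e k))) *
            ((if i ∈ e k then (1:ℝ) else 0) * (if j ∈ e k then (1:ℝ) else 0)) := by ring
      _ = a (e k) * ((if i ∈ e k then (1:ℝ) else 0) * (if j ∈ e k then (1:ℝ) else 0)) := by
          rw [hs]
  have hpsd : Λ.PosSemidef := by
    rw [hAA]
    have h1 : A.transpose = A.conjTranspose := by
      ext k i
      simp [Matrix.conjTranspose_apply, Matrix.transpose_apply]
    rw [h1]
    exact Matrix.posSemidef_self_mul_conjTranspose A
  exact ⟨⟨m, A, hA0, hAA⟩, hpsd⟩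
end
end

section
/- For every α ∈ [0,1/2] and every d ∈ ℕ, the d×d MA(1) matrix Λ with Λ_{ii} = 1, Λ_{ij} = α when |i−j| = 1, and Λ_{ij} = 0 when |i−j| ≥ 2, is a tail-dependence matrix. Concretely, if Z is uniform on [0,d], X_i = 1_{{Z ∈ [(i−1)(1−α), (i−1)(1−α)+1]}} for i = 1,...,d, p = 1/d, U, V are uniform on [0,1] with U, V, X independent, and Y = X·pU + (1−X)·(p + (1−p)V) componentwise, then Y has uniform [0,1] margins and its pairwise tail-dependence coefficients form the MA(1) matrix with parameter α (Proposition 4.1(iii)). -/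
open MeasureTheory ProbabilityTheory Filter Set

noncomputable section

lemma stdUniform_apply {s : Set ℝ} (hs : MeasurableSet s) :
    stdUniform s = volume (s ∩ Icc 0 1) := Measure.restrict_apply hs

lemma stdUniform_Iic_s15 (u : ℝ) : stdUniform (Iic u) = ENNReal.ofReal (min u 1) := by
  rw [stdUniform_apply measurableSet_Iic]
  have h : Iic u ∩ Icc (0:ℝ) 1 = Icc 0 (min u 1) := by
    ext t
    simp only [mem_inter_iff, mem_Iic, mem_Icc, le_min_iff]
    tauto
  rw [h, Real.volume_Icc, sub_zero]

/-- Proposition 4.1(iii): the MA(1) matrix with parameter `α ∈ [0,1/2]` is a tail-dependence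
matrix; concretely, if `Z` is uniform on `[0,d]`,
`X i = 1_{Z ∈ [(i-1)(1-α), (i-1)(1-α)+1]}`, `p = 1/d`, `U, V` standard uniform with
`Z, U, V` independent and `Y i = X i * (p U) + (1 - X i) * (p + (1-p) V)`, then `Y` has
standard uniform margins and its pairwise tail-dependence coefficients form the MA(1)
matrix. -/
theorem ma1_tail_dependence {d : ℕ} (α : ℝ) (hα : α ∈ Set.Icc (0:ℝ) (1/2))
    (Ω : Type) [MeasurableSpace Ω] (μ : Measure Ω) [IsProbabilityMeasure μ]
    (Z U V : Ω → ℝ)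
    (hZmeas : Measurable Z) (hUmeas : Measurable U) (hVmeas : Measurable V)
    (hZ : μ.map Z = ((d : ENNReal))⁻¹ • volume.restrict (Set.Icc (0:ℝ) (d : ℝ)))
    (hU : μ.map U = stdUniform) (hV : μ.map V = stdUniform)
    (hindep : ProbabilityTheory.iIndepFun ![Z, U, V] μ)
    (X : Ω → Fin d → ℝ)
    (hX : ∀ ω i, X ω i =
      if (i.val : ℝ) * (1 - α) ≤ Z ω ∧ Z ω ≤ (i.val : ℝ) * (1 - α) + 1 then 1 else 0)
    (Y : Ω → Fin d → ℝ)
    (hY : ∀ ω i, Y ω i =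
      X ω i * ((1 / d : ℝ) * U ω) + (1 - X ω i) * ((1 / d : ℝ) + (1 - (1 / d : ℝ)) * V ω)) :
    (∀ i, μ.map (fun ω => Y ω i) = stdUniform) ∧
    (∀ i j, HasTailDepCoeff μ (fun ω => Y ω i) (fun ω => Y ω j)
      (if i = j then 1 else if ((i.val : ℤ) - (j.val : ℤ)).natAbs = 1 then α else 0)) ∧
    IsTailDependenceMatrix (Matrix.of fun i j : Fin d =>
      if i = j then (1:ℝ) else if ((i.val : ℤ) - (j.val : ℤ)).natAbs = 1 then α else 0) := by
  obtain ⟨hα0, hα2⟩ := hα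
  -- d is positive
  have hd : 0 < d := by
    rcases Nat.eq_zero_or_pos d with h0 | h; swap
    · exact h
    exfalso
    have h1 : (μ.map Z) univ = 1 := by
      rw [Measure.map_apply hZmeas MeasurableSet.univ]
      simp
    rw [hZ, h0] at h1
    simp [Measure.smul_apply, Measure.restrict_apply, Icc_self] at h1
  have hdR : (0:ℝ) < d := by exact_mod_cast hd
  set p : ℝ := 1 / (d:ℝ) with hpdef
  have hp : 0 < p := by positivity
  have hp1 : p ≤ 1 := by
    rw [hpdef, div_le_one hdR]
    exact_mod_cast hd
  have hdp : ((d:ENNReal))⁻¹ = ENNReal.ofReal p := by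
    rw [hpdef, one_div, ENNReal.ofReal_inv_of_pos hdR, ENNReal.ofReal_natCast]
  -- intervals
  set a : Fin d → ℝ := fun i => (i.val : ℝ) * (1 - α) with hadef
  set S : Fin d → Set ℝ := fun i => Icc (a i) (a i + 1) with hSdef
  have ha0 : ∀ i, 0 ≤ a i := by
    intro i
    apply mul_nonneg (Nat.cast_nonneg _)
    linarith
  have ha1 : ∀ i, a i + 1 ≤ d := by
    intro i
    have hi : (i.val : ℝ) ≤ (d:ℝ) - 1 := by
      have := i.isLt
      have : (i.val : ℝ) ≤ (d:ℝ) - 1 := by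
        have h := Nat.lt_iff_add_one_le.mp i.isLt
        have : ((i.val + 1 : ℕ) : ℝ) ≤ (d:ℝ) := by exact_mod_cast h
        push_cast at this
        linarith
      exact this
    have hia : (i.val:ℝ) * (1 - α) ≤ (i.val:ℝ) := by
      nlinarith [Nat.cast_nonneg (α := ℝ) i.val]
    simp only [hadef]
    linarith
  have hSsub : ∀ i, S i ⊆ Icc (0:ℝ) d := by
    intro i t ht
    simp only [hSdef, mem_Icc] at ht ⊢
    constructor
    · linarith [ha0 i]
    · linarith [ha1 i]
  -- measure of Z-preimages
  have hμZ : ∀ s : Set ℝ, MeasurableSet s →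
      μ (Z ⁻¹' s) = ((d:ENNReal))⁻¹ * volume (s ∩ Icc (0:ℝ) d) := by
    intro s hs
    rw [← Measure.map_apply hZmeas hs, hZ, Measure.smul_apply,
      Measure.restrict_apply hs, smul_eq_mul]
  have hZS : ∀ i, μ (Z ⁻¹' S i) = ((d:ENNReal))⁻¹ := by
    intro i
    rw [hμZ _ measurableSet_Icc, inter_eq_left.mpr (hSsub i)]
    simp only [hSdef]
    rw [Real.volume_Icc]
    norm_num
  -- pointwise formula for Y
  have hYpt : ∀ ω i, Y ω i = if Z ω ∈ S i then p * U ω else p + (1 - p) * V ω := by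
    intro ω i
    rw [hY, hX]
    by_cases h : (i.val : ℝ) * (1 - α) ≤ Z ω ∧ Z ω ≤ (i.val : ℝ) * (1 - α) + 1
    · rw [if_pos h, if_pos (by simpa [hSdef, hadef, mem_Icc] using h)]
      ring
    · rw [if_neg h, if_neg (by simpa [hSdef, hadef, mem_Icc] using h)]
      ring
  have hYmeas : ∀ i, Measurable (fun ω => Y ω i) := by
    intro i
    have : (fun ω => Y ω i) = fun ω => if Z ω ∈ S i then p * U ω else p + (1 - p) * V ω :=
      funext fun ω => hYpt ω i
    rw [this]
    exact Measurable.ite (hZmeas measurableSet_Icc)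
      (measurable_const.mul hUmeas)
      (measurable_const.add (measurable_const.mul hVmeas))
  -- independence
  have indepZU : IndepFun Z U μ := by
    have h := hindep.indepFun (show (0:Fin 3) ≠ 1 by decide)
    simpa using h
  have indepZV : IndepFun Z V μ := by
    have h := hindep.indepFun (show (0:Fin 3) ≠ 2 by decide)
    simpa using h
  -- measures of U, V preimages
  have hμU : ∀ s : Set ℝ, MeasurableSet s → μ (U ⁻¹' s) = stdUniform s := by
    intro s hs; rw [← Measure.map_apply hUmeas hs, hU]
  have hμV : ∀ s : Set ℝ, MeasurableSet s → μ (V ⁻¹' s) = stdUniform s := by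
    intro s hs; rw [← Measure.map_apply hVmeas hs, hV]
  -- margin computation
  have hmargin : ∀ i u, μ {ω | Y ω i ≤ u}
      = ENNReal.ofReal (min u p) + ENNReal.ofReal (min (u - p) (1 - p)) := by
    intro i u
    have hsplit : {ω | Y ω i ≤ u}
        = (Z ⁻¹' S i ∩ U ⁻¹' Iic (u / p)) ∪
          (Z ⁻¹' (S i)ᶜ ∩ V ⁻¹' {t | p + (1 - p) * t ≤ u}) := by
      ext ω
      simp only [mem_setOf_eq, mem_union, mem_inter_iff, mem_preimage, mem_Iic, mem_compl_iff]
      constructor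
      · intro hle
        rw [hYpt ω i] at hle
        by_cases h : Z ω ∈ S i
        · left
          rw [if_pos h] at hle
          exact ⟨h, by rw [le_div_iff₀ hp, mul_comm]; exact hle⟩
        · right
          rw [if_neg h] at hle
          exact ⟨h, hle⟩
      · rintro (⟨h, hle⟩ | ⟨h, hle⟩) <;> rw [hYpt ω i]
        · rw [if_pos h, mul_comm, ← le_div_iff₀ hp]
          exact hle
        · rw [if_neg h]
          exact hle
    have hCmeas : MeasurableSet {t : ℝ | p + (1 - p) * t ≤ u} := by
      have : {t : ℝ | p + (1 - p) * t ≤ u} = (fun t => p + (1 - p) * t) ⁻¹' Iic u := rfl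
      rw [this]
      exact (measurable_const.add (measurable_const.mul measurable_id)) measurableSet_Iic
    have hdisj : Disjoint (Z ⁻¹' S i ∩ U ⁻¹' Iic (u / p))
        (Z ⁻¹' (S i)ᶜ ∩ V ⁻¹' {t | p + (1 - p) * t ≤ u}) := by
      apply Disjoint.mono inter_subset_left inter_subset_left
      rw [preimage_compl]
      exact disjoint_compl_right
    rw [hsplit, measure_union hdisj
      ((hZmeas measurableSet_Icc.compl).inter (hVmeas hCmeas))]
    rw [indepZU.measure_inter_preimage_eq_mul _ _ measurableSet_Icc measurableSet_Iic,
      indepZV.measure_inter_preimage_eq_mul _ _ measurableSet_Icc.compl hCmeas]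
    rw [hZS i, hμU _ measurableSet_Iic, stdUniform_Iic_s15]
    have hZSc : μ (Z ⁻¹' (S i)ᶜ) = 1 - ((d:ENNReal))⁻¹ := by
      rw [preimage_compl, measure_compl (hZmeas measurableSet_Icc) (measure_ne_top _ _),
        hZS i, measure_univ]
    rw [hZSc]
    have h1 : ((d:ENNReal))⁻¹ * ENNReal.ofReal (min (u / p) 1) = ENNReal.ofReal (min u p) := by
      rw [hdp, ← ENNReal.ofReal_mul hp.le, mul_min_of_nonneg _ _ hp.le,
        mul_div_cancel₀ _ hp.ne', mul_one]
    have h2 : (1 - ((d:ENNReal))⁻¹) * μ (V ⁻¹' {t | p + (1 - p) * t ≤ u})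
        = ENNReal.ofReal (min (u - p) (1 - p)) := by
      have h1p : (1 : ENNReal) - ((d:ENNReal))⁻¹ = ENNReal.ofReal (1 - p) := by
        rw [hdp, ENNReal.ofReal_sub _ hp.le, ENNReal.ofReal_one]
      rw [h1p]
      rcases eq_or_lt_of_le hp1 with hpe | hpl
      · rw [← hpe]
        simp
      · have hC : {t : ℝ | p + (1 - p) * t ≤ u} = Iic ((u - p) / (1 - p)) := by
          ext t
          simp only [mem_setOf_eq, mem_Iic]
          rw [le_div_iff₀ (by linarith), mul_comm]
          constructor <;> intro <;> linarith
        rw [hC, hμV _ measurableSet_Iic, stdUniform_Iic_s15,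
          ← ENNReal.ofReal_mul (by linarith), mul_min_of_nonneg _ _ (by linarith : (0:ℝ) ≤ 1 - p),
          mul_div_cancel₀ _ (by linarith : (1:ℝ) - p ≠ 0), mul_one]
    rw [h1, h2]
  -- margins
  have part1 : ∀ i, μ.map (fun ω => Y ω i) = stdUniform := by
    intro i
    haveI : IsProbabilityMeasure (μ.map (fun ω => Y ω i)) :=
      Measure.isProbabilityMeasure_map (hYmeas i).aemeasurable
    refine Measure.ext_of_Iic _ _ (fun u => ?_)
    rw [Measure.map_apply (hYmeas i) measurableSet_Iic, stdUniform_Iic_s15]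
    have : (fun ω => Y ω i) ⁻¹' Iic u = {ω | Y ω i ≤ u} := rfl
    rw [this, hmargin i u]
    rcases le_total u p with hup | hpu
    · rw [show ENNReal.ofReal (min (u - p) (1 - p)) = 0 from
        ENNReal.ofReal_of_nonpos (le_trans (min_le_left _ _) (by linarith)), add_zero,
        min_eq_left hup, min_eq_left (le_trans hup hp1)]
    · rw [min_eq_right hpu, ← ENNReal.ofReal_add hp.le
        (le_min (by linarith) (by linarith))]
      congr 1
      rcases le_total u 1 with hu1 | h1u
      · rw [min_eq_left (by linarith), min_eq_left hu1]
        ring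
      · rw [min_eq_right (by linarith), min_eq_right h1u]
        ring
  -- pair event measure for small u
  have hVneg : μ (V ⁻¹' Iio 0) = 0 := by
    rw [hμV _ measurableSet_Iio, stdUniform_apply measurableSet_Iio]
    have he : Iio (0:ℝ) ∩ Icc 0 1 = ∅ := by
      ext t
      simp only [mem_inter_iff, mem_Iio, mem_Icc, mem_empty_iff_false, iff_false]
      rintro ⟨h1, h2, _⟩
      linarith
    rw [he, measure_empty]
  have hpair : ∀ i j u, 0 < u → u < p →
      μ {ω | Y ω i ≤ u ∧ Y ω j ≤ u}
      = ((d:ENNReal))⁻¹ * (volume (S i ∩ S j)) * ENNReal.ofReal (u / p) := by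
    intro i j u hu hup
    set E' : Set Ω := Z ⁻¹' (S i ∩ S j) ∩ U ⁻¹' Iic (u / p) with hE'
    have hsub1 : E' ⊆ {ω | Y ω i ≤ u ∧ Y ω j ≤ u} := by
      rintro ω ⟨hz, hu'⟩
      simp only [mem_preimage, mem_inter_iff] at hz
      simp only [mem_preimage, mem_Iic] at hu'
      have hUle : p * U ω ≤ u := by
        have h := mul_le_mul_of_nonneg_left hu' hp.le
        rwa [mul_div_cancel₀ u hp.ne'] at h
      have hyi : Y ω i ≤ u := by rw [hYpt, if_pos hz.1]; exact hUle
      have hyj : Y ω j ≤ u := by rw [hYpt, if_pos hz.2]; exact hUle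
      exact ⟨hyi, hyj⟩
    have hsub2 : {ω | Y ω i ≤ u ∧ Y ω j ≤ u} ∩ (V ⁻¹' Iio 0)ᶜ ⊆ E' := by
      rintro ω ⟨⟨hyi, hyj⟩, hv⟩
      simp only [mem_compl_iff, mem_preimage, mem_Iio, not_lt] at hv
      rw [hYpt] at hyi hyj
      have hVge : p ≤ p + (1 - p) * V ω := by nlinarith
      by_cases hi : Z ω ∈ S i
      · by_cases hj : Z ω ∈ S j
        · rw [if_pos hi] at hyi
          refine ⟨⟨hi, hj⟩, ?_⟩
          simp only [mem_preimage, mem_Iic]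
          rw [le_div_iff₀ hp, mul_comm]
          exact hyi
        · rw [if_neg hj] at hyj
          exact absurd hyj (by linarith)
      · rw [if_neg hi] at hyi
        exact absurd hyi (by linarith)
    have hEeq : μ {ω | Y ω i ≤ u ∧ Y ω j ≤ u} = μ E' := by
      apply le_antisymm
      · calc μ {ω | Y ω i ≤ u ∧ Y ω j ≤ u}
            = μ ({ω | Y ω i ≤ u ∧ Y ω j ≤ u} ∩ (V ⁻¹' Iio 0)ᶜ) := by
              rw [measure_inter_conull (by rwa [compl_compl])]
          _ ≤ μ E' := measure_mono hsub2
      · exact measure_mono hsub1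
    rw [hEeq, hE', indepZU.measure_inter_preimage_eq_mul _ _
      (measurableSet_Icc.inter measurableSet_Icc) measurableSet_Iic,
      hμZ _ (measurableSet_Icc.inter measurableSet_Icc),
      inter_eq_left.mpr ((inter_subset_left).trans (hSsub i)),
      hμU _ measurableSet_Iic, stdUniform_Iic_s15,
      min_eq_left (le_of_lt (by rwa [div_lt_one hp]))]
  -- volume of intersection
  have hvol : ∀ i j : Fin d, volume (S i ∩ S j)
      = ENNReal.ofReal (1 - (1 - α) * |(i.val:ℝ) - (j.val:ℝ)|) := by
    intro i j
    simp only [hSdef]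
    rw [Icc_inter_Icc, Real.volume_Icc, min_add_add_right]
    congr 1
    have habs : |a i - a j| = (1 - α) * |(i.val:ℝ) - (j.val:ℝ)| := by
      have : a i - a j = ((i.val:ℝ) - (j.val:ℝ)) * (1 - α) := by
        simp only [hadef]; ring
      rw [this, abs_mul, abs_of_nonneg (by linarith : (0:ℝ) ≤ 1 - α), mul_comm]
    have hms : a i ⊔ a j - a i ⊓ a j = |a i - a j| := by
      rw [max_sub_min_eq_abs, abs_sub_comm]
    linarith [hms, habs]
  -- tail dependence coefficients
  have part2 : ∀ i j, HasTailDepCoeff μ (fun ω => Y ω i) (fun ω => Y ω j)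
      (if i = j then 1 else if ((i.val : ℤ) - (j.val : ℤ)).natAbs = 1 then α else 0) := by
    intro i j
    unfold HasTailDepCoeff
    apply Tendsto.congr' _ tendsto_const_nhds
    filter_upwards [Ioo_mem_nhdsGT_of_mem (show (0:ℝ) ∈ Ico 0 p from ⟨le_refl _, hp⟩)]
      with u hu
    obtain ⟨hu0, hup⟩ := hu
    by_cases hij : i = j
    · subst hij
      rw [if_pos rfl]
      have : {ω | Y ω i ≤ u ∧ Y ω i ≤ u} = {ω | Y ω i ≤ u} := by
        ext ω; simp [and_self]
      rw [this, hmargin i u,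
        show ENNReal.ofReal (min (u - p) (1 - p)) = 0 from
          ENNReal.ofReal_of_nonpos (le_trans (min_le_left _ _) (by linarith)), add_zero,
        min_eq_left hup.le, ENNReal.toReal_ofReal hu0.le, div_self hu0.ne']
    · rw [if_neg hij, hpair i j u hu0 hup, hvol i j]
      have hcast : |(i.val:ℝ) - (j.val:ℝ)| = ((((i.val:ℤ) - (j.val:ℤ)).natAbs : ℕ) : ℝ) := by
        rw [Nat.cast_natAbs]
        push_cast
        ring_nf
      set k : ℕ := ((i.val:ℤ) - (j.val:ℤ)).natAbs with hk
      have hk0 : k ≠ 0 := by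
        simp only [hk, Int.natAbs_ne_zero, sub_ne_zero]
        exact_mod_cast fun h => hij (Fin.ext (by exact_mod_cast h))
      by_cases hk1 : k = 1
      · rw [if_pos hk1, hcast, hk1]
        simp only [Nat.cast_one, mul_one]
        rw [show (1:ℝ) - (1 - α) = α by ring, hdp,
          ← ENNReal.ofReal_mul hp.le,
          ← ENNReal.ofReal_mul (mul_nonneg hp.le hα0),
          ENNReal.toReal_ofReal
            (mul_nonneg (mul_nonneg hp.le hα0) (div_nonneg hu0.le hp.le))]
        rw [show p * α * (u / p) = α * u by
          rw [mul_comm p α, mul_assoc, mul_div_cancel₀ u hp.ne'],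
          mul_div_assoc, div_self hu0.ne', mul_one]
      · rw [if_neg hk1]
        have hk2 : 2 ≤ k := by omega
        have : (1:ℝ) - (1 - α) * |(i.val:ℝ) - (j.val:ℝ)| ≤ 0 := by
          rw [hcast]
          have : (2:ℝ) ≤ (k:ℝ) := by exact_mod_cast hk2
          nlinarith
        rw [ENNReal.ofReal_of_nonpos this, mul_zero, zero_mul]
        simp
  refine ⟨part1, part2, Ω, ‹_›, μ, ‹_›, Y, measurable_pi_lambda Y hYmeas, part1, ?_⟩
  intro i j
  have := part2 i j
  simpa [Matrix.of_apply] using this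
end
end

section
/- Let Q be a d×m row-substochastic matrix (all entries nonnegative and each row sum at most 1) and let Λ be an m×m tail-dependence matrix. Then L(Q Λ Qᵀ), obtained from Q Λ Qᵀ by replacing all diagonal entries with 1, is a d×d tail-dependence matrix. In particular, L(Q Qᵀ) is a tail-dependence matrix for every row-substochastic Q, and L(p·pᵀ) is a tail-dependence matrix for every p ∈ [0,1]^d (Proposition 4.4). -/
open MeasureTheory ProbabilityTheory Filter Set

noncomputable section

/-- The map `L`: replace all diagonal entries of a square matrix by `1`. -/
def diagOne {d : ℕ} (A : Matrix (Fin d) (Fin d) ℝ) : Matrix (Fin d) (Fin d) ℝ :=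
  Matrix.of fun i j => if i = j then 1 else A i j

instance stdUniform_prob : IsProbabilityMeasure stdUniform := by
  constructor
  simp [stdUniform, Measure.restrict_apply, Real.volume_Icc]

lemma margin_Iic {Ω : Type} [MeasurableSpace Ω] {μ : Measure Ω} {Yi : Ω → ℝ}
    (hm : Measurable Yi) (h : μ.map Yi = stdUniform) {u : ℝ} (h0 : 0 ≤ u) (h1 : u ≤ 1) :
    μ {ω | Yi ω ≤ u} = ENNReal.ofReal u := by
  have := Measure.map_apply (μ := μ) hm (measurableSet_Iic (a := u))
  rw [h, stdUniform_Iic h0 h1] at this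
  exact this.symm

lemma hasTailDepCoeff_self {Ω : Type} [MeasurableSpace Ω] {μ : Measure Ω} {Yi : Ω → ℝ}
    (hm : Measurable Yi) (h : μ.map Yi = stdUniform) :
    Filter.Tendsto (fun u : ℝ => (μ {ω | Yi ω ≤ u ∧ Yi ω ≤ u}).toReal / u)
      (nhdsWithin 0 (Set.Ioi 0)) (nhds 1) := by
  have hev : ∀ᶠ u in nhdsWithin (0:ℝ) (Set.Ioi 0),
      (μ {ω | Yi ω ≤ u ∧ Yi ω ≤ u}).toReal / u = 1 := by
    filter_upwards [Ioo_mem_nhdsGT_of_mem (by norm_num : (0:ℝ) ∈ Ico (0:ℝ) 1)] with u hu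
    have : {ω | Yi ω ≤ u ∧ Yi ω ≤ u} = {ω | Yi ω ≤ u} := by ext ω; simp [and_self]
    rw [this, margin_Iic hm h hu.1.le hu.2.le, ENNReal.toReal_ofReal hu.1.le,
      div_self (ne_of_gt hu.1)]
  exact Tendsto.congr' (Filter.EventuallyEq.symm hev) tendsto_const_nhds

lemma pi_two_cylinder {ι : Type*} [Fintype ι] [DecidableEq ι] {α : ι → Type*}
    [∀ i, MeasurableSpace (α i)] (μ : ∀ i, Measure (α i)) [∀ i, IsProbabilityMeasure (μ i)]
    {i j : ι} (hij : i ≠ j) (A : Set (α i)) (B : Set (α j)) :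
    Measure.pi μ {f | f i ∈ A ∧ f j ∈ B} = μ i A * μ j B := by
  classical
  set t : ∀ x, Set (α x) := Function.update (Function.update (fun x => (univ : Set (α x))) i A) j B with ht
  have hset : {f : ∀ x, α x | f i ∈ A ∧ f j ∈ B} = Set.pi univ t := by
    ext f
    simp only [mem_setOf_eq, mem_univ_pi, ht]
    constructor
    · rintro ⟨hA, hB⟩ x
      rcases eq_or_ne x j with rfl | hxj
      · simpa using hB
      · rw [Function.update_of_ne hxj]
        rcases eq_or_ne x i with rfl | hxi
        · simpa using hA
        · simp [Function.update_of_ne hxi]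
    · intro hall
      refine ⟨?_, ?_⟩
      · have := hall i
        rwa [Function.update_of_ne hij, Function.update_self] at this
      · have := hall j
        rwa [Function.update_self] at this
  rw [hset, Measure.pi_pi]
  have hout : ∀ x ∈ Finset.univ, x ∉ ({i, j} : Finset ι) → μ x (t x) = 1 := by
    intro x _ hx
    simp only [Finset.mem_insert, Finset.mem_singleton, not_or] at hx
    simp [ht, Function.update_of_ne hx.2, Function.update_of_ne hx.1, measure_univ]
  rw [← Finset.prod_subset (Finset.subset_univ ({i,j} : Finset ι)) hout,
    Finset.prod_pair hij]
  simp [ht, Function.update_of_ne hij]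

lemma pi_one_cylinder {ι : Type*} [Fintype ι] [DecidableEq ι] {α : ι → Type*}
    [∀ i, MeasurableSpace (α i)] (μ : ∀ i, Measure (α i)) [∀ i, IsProbabilityMeasure (μ i)]
    (i : ι) (A : Set (α i)) :
    Measure.pi μ {f | f i ∈ A} = μ i A := by
  classical
  have hset : {f : ∀ x, α x | f i ∈ A} = Set.pi univ (Function.update (fun x => (univ : Set (α x))) i A) := by
    ext f
    simp only [mem_setOf_eq, mem_univ_pi]
    constructor
    · intro hA x
      rcases eq_or_ne x i with rfl | hxi
      · simpa using hA
      · simp [Function.update_of_ne hxi]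
    · intro hall
      have := hall i
      rwa [Function.update_self] at this
  rw [hset, Measure.pi_pi]
  have hout : ∀ x ∈ Finset.univ, x ∉ ({i} : Finset ι) → μ x (Function.update (fun x => (univ : Set (α x))) i A x) = 1 := by
    intro x _ hx
    simp only [Finset.mem_singleton] at hx
    simp [Function.update_of_ne hx, measure_univ]
  rw [← Finset.prod_subset (Finset.subset_univ ({i} : Finset ι)) hout, Finset.prod_singleton]
  simp

lemma identity_TDM (m : ℕ) : IsTailDependenceMatrix (1 : Matrix (Fin m) (Fin m) ℝ) := by
  refine ⟨Fin m → ℝ, inferInstance, Measure.pi (fun _ => stdUniform), inferInstance,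
    fun ω => ω, measurable_id, ?_, ?_⟩
  · intro i
    ext s hs
    rw [Measure.map_apply (measurable_pi_apply i) hs]
    exact pi_one_cylinder (fun _ => stdUniform) i s
  · intro i j
    rcases eq_or_ne i j with rfl | hij
    · have hmargin : (Measure.pi (fun _ : Fin m => stdUniform)).map (fun ω => ω i) = stdUniform := by
        ext s hs
        rw [Measure.map_apply (measurable_pi_apply i) hs]
        exact pi_one_cylinder (fun _ => stdUniform) i s
      unfold HasTailDepCoeff
      rw [Matrix.one_apply_eq]
      exact hasTailDepCoeff_self (measurable_pi_apply i) hmargin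
    · unfold HasTailDepCoeff
      rw [Matrix.one_apply_ne hij]
      have hev : ∀ᶠ u in nhdsWithin (0:ℝ) (Set.Ioi 0),
          (Measure.pi (fun _ : Fin m => stdUniform) {ω | ω i ≤ u ∧ ω j ≤ u}).toReal / u = u := by
        filter_upwards [Ioo_mem_nhdsGT_of_mem (by norm_num : (0:ℝ) ∈ Ico (0:ℝ) 1)] with u hu
        have : {ω : Fin m → ℝ | ω i ≤ u ∧ ω j ≤ u} = {f | f i ∈ Iic u ∧ f j ∈ Iic u} := rfl
        rw [this, pi_two_cylinder (fun _ => stdUniform) hij, stdUniform_Iic hu.1.le hu.2.le,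
          ← ENNReal.ofReal_mul hu.1.le, ENNReal.toReal_ofReal (by nlinarith [hu.1.le] : 0 ≤ u * u)]
        field_simp
      refine Tendsto.congr' (Filter.EventuallyEq.symm hev) ?_
      exact tendsto_id.mono_left nhdsWithin_le_nhds

section Main

variable {d m : ℕ}

lemma main_TDM (Q : Matrix (Fin d) (Fin m) ℝ)
    (hQnonneg : ∀ i j, 0 ≤ Q i j) (hQrow : ∀ i, (∑ j, Q i j) ≤ 1)
    (Λ : Matrix (Fin m) (Fin m) ℝ) (hΛ : IsTailDependenceMatrix Λ) :
    IsTailDependenceMatrix (diagOne (Q * Λ * Q.transpose)) := by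
  rw [diagOne]
  classical
  obtain ⟨Ω', m', μ', hμ', Y', hY'meas, hY'margin, hY'tail⟩ := hΛ
  letI := m'
  -- weights
  set w : Fin d → Fin (m+1) → ℝ := fun i => Fin.snoc (Q i) (1 - ∑ j, Q i j) with hw
  have hw0 : ∀ i k, 0 ≤ w i k := by
    intro i k
    induction k using Fin.lastCases with
    | last => simp only [hw, Fin.snoc_last]; linarith [hQrow i]
    | cast k₀ => simp only [hw, Fin.snoc_castSucc]; exact hQnonneg i k₀
  have hwsum : ∀ i, ∑ k, w i k = 1 := by
    intro i
    rw [Fin.sum_univ_castSucc]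
    simp only [hw, Fin.snoc_castSucc, Fin.snoc_last]
    ring
  -- discrete measures
  set δ : Fin d → Measure (Fin (m+1)) :=
    fun i => ∑ k : Fin (m+1), (ENNReal.ofReal (w i k)) • Measure.dirac k with hδ
  have hδ_apply : ∀ i (A : Set (Fin (m+1))),
      δ i A = ∑ k, if k ∈ A then ENNReal.ofReal (w i k) else 0 := by
    intro i A
    rw [hδ]
    rw [Measure.finset_sum_apply]
    refine Finset.sum_congr rfl fun k _ => ?_
    rw [Measure.smul_apply, Measure.dirac_apply' _ (by trivial : MeasurableSet A)]
    by_cases hk : k ∈ A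
    · simp [indicator, hk]
    · simp [indicator, hk]
  have hδ_singleton : ∀ i k, δ i {k} = ENNReal.ofReal (w i k) := by
    intro i k
    rw [hδ_apply]
    rw [Finset.sum_eq_single k]
    · simp
    · intro b _ hb; simp [hb]
    · simp
  haveI hδprob : ∀ i, IsProbabilityMeasure (δ i) := by
    intro i
    constructor
    rw [hδ_apply]
    simp only [mem_univ, if_true]
    rw [← ENNReal.ofReal_sum_of_nonneg (fun k _ => hw0 i k), hwsum i]
    simp
  -- coordinate measures and product
  set νs : Fin d → Measure (Fin (m+1) × ℝ) := fun i => (δ i).prod stdUniform with hνs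
  haveI : ∀ i, IsProbabilityMeasure (νs i) := fun i => by
    rw [hνs]; infer_instance
  have hν_cyl : ∀ (x : Fin d) (k : Fin (m+1)) (A : Set ℝ),
      νs x ({k} ×ˢ A) = ENNReal.ofReal (w x k) * stdUniform A := by
    intro x k A
    rw [hνs]
    rw [Measure.prod_prod, hδ_singleton]
  set π : Measure (Fin d → Fin (m+1) × ℝ) := Measure.pi νs with hπ
  haveI : IsProbabilityMeasure π := by rw [hπ]; infer_instance
  set μ : Measure (Ω' × (Fin d → Fin (m+1) × ℝ)) := μ'.prod π with hμ
  haveI : IsProbabilityMeasure μ := by rw [hμ]; infer_instance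
  -- the random vector
  set Y : Ω' × (Fin d → Fin (m+1) × ℝ) → Fin d → ℝ :=
    fun ω i => Fin.lastCases ((ω.2 i).2) (fun k₀ => Y' ω.1 k₀) ((ω.2 i).1) with hY
  have hYcast : ∀ ω (i : Fin d) (k₀ : Fin m), (ω.2 i).1 = Fin.castSucc k₀ →
      Y ω i = Y' ω.1 k₀ := by
    intro ω i k₀ h
    rw [hY]
    simp only [h, Fin.lastCases_castSucc]
  have hYlast : ∀ ω (i : Fin d), (ω.2 i).1 = Fin.last m → Y ω i = (ω.2 i).2 := by
    intro ω i h
    rw [hY]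
    simp only [h, Fin.lastCases_last]
  -- measurability
  have hYe : ∀ k : Fin (m+1), Measurable
      (fun q : Ω' × (Fin (m+1) × ℝ) => Fin.lastCases q.2.2 (fun k₀ => Y' q.1 k₀) k : _ → ℝ) := by
    intro k
    induction k using Fin.lastCases with
    | last =>
      simp only [Fin.lastCases_last]
      exact measurable_snd.snd
    | cast k₀ =>
      simp only [Fin.lastCases_castSucc]
      exact (measurable_pi_apply k₀).comp (hY'meas.comp measurable_fst)
  have hφ : Measurable (fun q : Ω' × (Fin (m+1) × ℝ) =>
      Fin.lastCases q.2.2 (fun k₀ => Y' q.1 k₀) q.2.1 : _ → ℝ) := by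
    have heq : (fun q : Ω' × (Fin (m+1) × ℝ) =>
        Fin.lastCases q.2.2 (fun k₀ => Y' q.1 k₀) q.2.1 : _ → ℝ) =
        fun q => ∑ k : Fin (m+1), if q.2.1 = k then
          (Fin.lastCases q.2.2 (fun k₀ => Y' q.1 k₀) k : ℝ) else 0 := by
      funext q
      rw [Finset.sum_eq_single q.2.1]
      · simp
      · intro b _ hb; simp [Ne.symm hb]
      · simp
    rw [heq]
    refine Finset.measurable_sum _ fun k _ => ?_
    refine Measurable.ite ?_ (hYe k) measurable_const
    exact measurable_snd.fst (measurableSet_singleton k)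
  have hYmeas : Measurable Y := by
    refine measurable_pi_lambda _ fun i => ?_
    have : (fun ω => Y ω i) = (fun q : Ω' × (Fin (m+1) × ℝ) =>
        Fin.lastCases q.2.2 (fun k₀ => Y' q.1 k₀) q.2.1) ∘ (fun ω => (ω.1, ω.2 i)) := by
      funext ω; rfl
    rw [this]
    exact hφ.comp (measurable_fst.prodMk ((measurable_pi_apply i).comp measurable_snd))
  have hsum1 : ∀ x, ∑ k, ENNReal.ofReal (w x k) = 1 := by
    intro x
    rw [← ENNReal.ofReal_sum_of_nonneg (fun k _ => hw0 x k), hwsum x]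
    simp
  have hmargin : ∀ i, μ.map (fun ω => Y ω i) = stdUniform := by
    intro i
    have hYim : Measurable fun ω => Y ω i := (measurable_pi_apply i).comp hYmeas
    ext s hs
    rw [Measure.map_apply hYim hs]
    set S : Fin (m+1) → Set (Ω' × (Fin d → Fin (m+1) × ℝ)) :=
      fun k => {ω | (ω.2 i).1 = k} ∩ ((fun ω => Y ω i) ⁻¹' s) with hS
    have hdecomp : (fun ω => Y ω i) ⁻¹' s = ⋃ k, S k := by
      ext ω
      simp only [hS, mem_iUnion, mem_inter_iff, mem_setOf_eq, mem_preimage]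
      constructor
      · intro h; exact ⟨(ω.2 i).1, rfl, h⟩
      · rintro ⟨k, _, h⟩; exact h
    have hSmeas : ∀ k, MeasurableSet (S k) := by
      intro k
      refine MeasurableSet.inter ?_ (hYim hs)
      exact (measurable_fst.comp ((measurable_pi_apply i).comp measurable_snd))
        (measurableSet_singleton k)
    have hdisj : Pairwise (Function.onFun Disjoint S) := by
      intro k l hkl
      refine Set.disjoint_left.mpr ?_
      rintro ω ⟨hk, -⟩ ⟨hl, -⟩
      exact hkl (hk.symm.trans hl)
    rw [hdecomp, measure_iUnion hdisj hSmeas, tsum_fintype]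
    have hSval : ∀ k, μ (S k) = ENNReal.ofReal (w i k) * stdUniform s := by
      intro k
      induction k using Fin.lastCases with
      | last =>
        have hset : S (Fin.last m) = univ ×ˢ {f | f i ∈ ({Fin.last m} ×ˢ s)} := by
          ext ω
          simp only [hS, mem_inter_iff, mem_setOf_eq, mem_preimage, mem_prod, mem_univ,
            true_and, mem_singleton_iff]
          constructor
          · rintro ⟨h1, h2⟩
            exact ⟨h1, by rwa [hYlast ω i h1] at h2⟩
          · rintro ⟨h1, h2⟩
            exact ⟨h1, by rwa [hYlast ω i h1]⟩
        rw [hset, hμ, Measure.prod_prod, measure_univ, one_mul, hπ,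
          pi_one_cylinder, hν_cyl]
      | cast k₀ =>
        have hset : S (Fin.castSucc k₀) = ((fun ω' => Y' ω' k₀) ⁻¹' s) ×ˢ
            {f | f i ∈ ({Fin.castSucc k₀} ×ˢ (univ : Set ℝ))} := by
          ext ω
          simp only [hS, mem_inter_iff, mem_setOf_eq, mem_preimage, mem_prod, mem_univ,
            and_true, mem_singleton_iff]
          constructor
          · rintro ⟨h1, h2⟩
            exact ⟨by rwa [hYcast ω i k₀ h1] at h2, h1⟩
          · rintro ⟨h1, h2⟩
            exact ⟨h2, by rwa [hYcast ω i k₀ h2]⟩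
        rw [hset, hμ, Measure.prod_prod, hπ, pi_one_cylinder, hν_cyl, measure_univ, mul_one]
        have hmap : μ' ((fun ω' => Y' ω' k₀) ⁻¹' s) = stdUniform s := by
          have h1 := Measure.map_apply (μ := μ') (f := fun ω' => Y' ω' k₀)
            ((measurable_pi_apply k₀).comp hY'meas) hs
          rw [hY'margin k₀] at h1
          exact h1.symm
        rw [hmap, mul_comm]
    rw [Finset.sum_congr rfl fun k _ => hSval k, ← Finset.sum_mul, hsum1, one_mul]
  refine ⟨_, inferInstance, μ, inferInstance, Y, hYmeas, hmargin, ?_⟩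
  intro i j
  rcases eq_or_ne i j with rfl | hij
  · unfold HasTailDepCoeff
    have hof : (Matrix.of fun i j => if i = j then (1:ℝ)
        else (Q * Λ * Q.transpose) i j) i i = 1 := by simp
    rw [hof]
    exact hasTailDepCoeff_self ((measurable_pi_apply i).comp hYmeas) (hmargin i)
  · unfold HasTailDepCoeff
    have hof : (Matrix.of fun i j => if i = j then (1:ℝ)
        else (Q * Λ * Q.transpose) i j) i j = (Q * Λ * Q.transpose) i j := by
      simp [hij]
    rw [hof]
    have hYim : Measurable fun ω => Y ω i := (measurable_pi_apply i).comp hYmeas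
    have hYjm : Measurable fun ω => Y ω j := (measurable_pi_apply j).comp hYmeas
    -- the pieces
    set P : Fin (m+1) × Fin (m+1) → ℝ → Set (Ω' × (Fin d → Fin (m+1) × ℝ)) :=
      fun kl u => {ω | (ω.2 i).1 = kl.1 ∧ (ω.2 j).1 = kl.2} ∩
        {ω | Y ω i ≤ u ∧ Y ω j ≤ u} with hP
    have hPmeas : ∀ kl u, MeasurableSet (P kl u) := by
      intro kl u
      refine MeasurableSet.inter ?_ ?_
      · refine MeasurableSet.inter ?_ ?_
        · exact (measurable_fst.comp ((measurable_pi_apply i).comp measurable_snd))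
            (measurableSet_singleton kl.1)
        · exact (measurable_fst.comp ((measurable_pi_apply j).comp measurable_snd))
            (measurableSet_singleton kl.2)
      · exact (hYim measurableSet_Iic).inter (hYjm measurableSet_Iic)
    have hdecomp2 : ∀ u : ℝ, μ {ω | Y ω i ≤ u ∧ Y ω j ≤ u} = ∑ kl, μ (P kl u) := by
      intro u
      have hU : {ω | Y ω i ≤ u ∧ Y ω j ≤ u} = ⋃ kl, P kl u := by
        ext ω
        simp only [hP, mem_iUnion, mem_inter_iff, mem_setOf_eq]
        constructor
        · intro h
          exact ⟨((ω.2 i).1, (ω.2 j).1), ⟨rfl, rfl⟩, h⟩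
        · rintro ⟨kl, _, h⟩; exact h
      have hdisj2 : Pairwise (Function.onFun Disjoint (fun kl => P kl u)) := by
        intro kl kl' hne
        refine Set.disjoint_left.mpr ?_
        rintro ω ⟨⟨h1, h2⟩, -⟩ ⟨⟨h1', h2'⟩, -⟩
        exact hne (Prod.ext (h1.symm.trans h1') (h2.symm.trans h2'))
      rw [hU, measure_iUnion hdisj2 (fun kl => hPmeas kl u), tsum_fintype]
    -- measure of the pieces
    have hcc : ∀ (u : ℝ) (k₀ l₀ : Fin m),
        μ (P (Fin.castSucc k₀, Fin.castSucc l₀) u) =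
          μ' {ω' | Y' ω' k₀ ≤ u ∧ Y' ω' l₀ ≤ u} *
            (ENNReal.ofReal (Q i k₀) * ENNReal.ofReal (Q j l₀)) := by
      intro u k₀ l₀
      have hset : P (Fin.castSucc k₀, Fin.castSucc l₀) u =
          {ω' | Y' ω' k₀ ≤ u ∧ Y' ω' l₀ ≤ u} ×ˢ
          {f | f i ∈ ({Fin.castSucc k₀} ×ˢ (univ : Set ℝ)) ∧
               f j ∈ ({Fin.castSucc l₀} ×ˢ (univ : Set ℝ))} := by
        ext ω
        simp only [hP, mem_inter_iff, mem_setOf_eq, mem_prod, mem_singleton_iff,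
          mem_univ, and_true]
        constructor
        · rintro ⟨⟨h1, h2⟩, h3, h4⟩
          exact ⟨⟨by rwa [hYcast ω i k₀ h1] at h3, by rwa [hYcast ω j l₀ h2] at h4⟩, h1, h2⟩
        · rintro ⟨⟨h3, h4⟩, h1, h2⟩
          exact ⟨⟨h1, h2⟩, by rwa [hYcast ω i k₀ h1], by rwa [hYcast ω j l₀ h2]⟩
      rw [hset, hμ, Measure.prod_prod, hπ, pi_two_cylinder _ hij, hν_cyl, hν_cyl,
        measure_univ, mul_one, mul_one]
      have e1 : w i (Fin.castSucc k₀) = Q i k₀ := by simp [hw, Fin.snoc_castSucc]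
      have e2 : w j (Fin.castSucc l₀) = Q j l₀ := by simp [hw, Fin.snoc_castSucc]
      rw [e1, e2]
    have hcl : ∀ (u : ℝ) (k₀ : Fin m),
        μ (P (Fin.castSucc k₀, Fin.last m) u) =
          μ' {ω' | Y' ω' k₀ ≤ u} *
            (ENNReal.ofReal (Q i k₀) *
              (ENNReal.ofReal (w j (Fin.last m)) * stdUniform (Set.Iic u))) := by
      intro u k₀
      have hset : P (Fin.castSucc k₀, Fin.last m) u =
          {ω' | Y' ω' k₀ ≤ u} ×ˢ
          {f | f i ∈ ({Fin.castSucc k₀} ×ˢ (univ : Set ℝ)) ∧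
               f j ∈ ({Fin.last m} ×ˢ (Set.Iic u))} := by
        ext ω
        simp only [hP, mem_inter_iff, mem_setOf_eq, mem_prod, mem_singleton_iff,
          mem_univ, and_true, mem_Iic]
        constructor
        · rintro ⟨⟨h1, h2⟩, h3, h4⟩
          exact ⟨by rwa [hYcast ω i k₀ h1] at h3, ⟨h1, h2, by rwa [hYlast ω j h2] at h4⟩⟩
        · rintro ⟨h3, h1, h2, h4⟩
          exact ⟨⟨h1, h2⟩, by rwa [hYcast ω i k₀ h1], by rwa [hYlast ω j h2]⟩
      rw [hset, hμ, Measure.prod_prod, hπ, pi_two_cylinder _ hij, hν_cyl, hν_cyl,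
        measure_univ, mul_one]
      have e1 : w i (Fin.castSucc k₀) = Q i k₀ := by simp [hw, Fin.snoc_castSucc]
      rw [e1]
    have hlc : ∀ (u : ℝ) (l₀ : Fin m),
        μ (P (Fin.last m, Fin.castSucc l₀) u) =
          μ' {ω' | Y' ω' l₀ ≤ u} *
            ((ENNReal.ofReal (w i (Fin.last m)) * stdUniform (Set.Iic u)) *
              ENNReal.ofReal (Q j l₀)) := by
      intro u l₀
      have hset : P (Fin.last m, Fin.castSucc l₀) u =
          {ω' | Y' ω' l₀ ≤ u} ×ˢ
          {f | f i ∈ ({Fin.last m} ×ˢ (Set.Iic u)) ∧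
               f j ∈ ({Fin.castSucc l₀} ×ˢ (univ : Set ℝ))} := by
        ext ω
        simp only [hP, mem_inter_iff, mem_setOf_eq, mem_prod, mem_singleton_iff,
          mem_univ, and_true, mem_Iic]
        constructor
        · rintro ⟨⟨h1, h2⟩, h3, h4⟩
          exact ⟨by rwa [hYcast ω j l₀ h2] at h4, ⟨h1, by rwa [hYlast ω i h1] at h3⟩, h2⟩
        · rintro ⟨h4, ⟨h1, h3⟩, h2⟩
          exact ⟨⟨h1, h2⟩, by rwa [hYlast ω i h1], by rwa [hYcast ω j l₀ h2]⟩
      rw [hset, hμ, Measure.prod_prod, hπ, pi_two_cylinder _ hij, hν_cyl, hν_cyl,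
        measure_univ, mul_one]
      have e2 : w j (Fin.castSucc l₀) = Q j l₀ := by simp [hw, Fin.snoc_castSucc]
      rw [e2]
    have hll : ∀ u : ℝ,
        μ (P (Fin.last m, Fin.last m) u) =
          (ENNReal.ofReal (w i (Fin.last m)) * stdUniform (Set.Iic u)) *
            (ENNReal.ofReal (w j (Fin.last m)) * stdUniform (Set.Iic u)) := by
      intro u
      have hset : P (Fin.last m, Fin.last m) u =
          (univ : Set Ω') ×ˢ
          {f | f i ∈ ({Fin.last m} ×ˢ (Set.Iic u)) ∧
               f j ∈ ({Fin.last m} ×ˢ (Set.Iic u))} := by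
        ext ω
        simp only [hP, mem_inter_iff, mem_setOf_eq, mem_prod, mem_singleton_iff,
          mem_univ, true_and, mem_Iic]
        constructor
        · rintro ⟨⟨h1, h2⟩, h3, h4⟩
          exact ⟨⟨h1, by rwa [hYlast ω i h1] at h3⟩, h2, by rwa [hYlast ω j h2] at h4⟩
        · rintro ⟨⟨h1, h3⟩, h2, h4⟩
          exact ⟨⟨h1, h2⟩, by rwa [hYlast ω i h1], by rwa [hYlast ω j h2]⟩
      rw [hset, hμ, Measure.prod_prod, measure_univ, one_mul, hπ,
        pi_two_cylinder _ hij, hν_cyl, hν_cyl]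
    -- limit values
    set c : Fin (m+1) × Fin (m+1) → ℝ := fun kl =>
      Fin.lastCases 0 (fun k₀ =>
        Fin.lastCases 0 (fun l₀ => Q i k₀ * Λ k₀ l₀ * Q j l₀) kl.2) kl.1 with hc
    have hctotal : ∑ kl, c kl = (Q * Λ * Q.transpose) i j := by
      rw [Fintype.sum_prod_type, Fin.sum_univ_castSucc]
      have hlast0 : ∑ l, c (Fin.last m, l) = 0 := by
        simp [hc, Fin.lastCases_last]
      rw [hlast0, add_zero]
      have hrow : ∀ k₀ : Fin m,
          ∑ l, c (Fin.castSucc k₀, l) = ∑ l₀, Q i k₀ * Λ k₀ l₀ * Q j l₀ := by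
        intro k₀
        rw [Fin.sum_univ_castSucc]
        simp [hc, Fin.lastCases_castSucc, Fin.lastCases_last]
      rw [Finset.sum_congr rfl fun k₀ _ => hrow k₀]
      simp only [Matrix.mul_apply, Matrix.transpose_apply, Finset.sum_mul]
      rw [Finset.sum_comm]
    rw [← hctotal]
    have hsum : ∀ u : ℝ, (μ {ω | Y ω i ≤ u ∧ Y ω j ≤ u}).toReal / u
        = ∑ kl, (μ (P kl u)).toReal / u := by
      intro u
      rw [hdecomp2 u, ENNReal.toReal_sum (fun kl _ => measure_ne_top μ _), Finset.sum_div]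
    refine Tendsto.congr (fun u => (hsum u).symm) ?_
    refine tendsto_finset_sum _ fun kl _ => ?_
    obtain ⟨k, l⟩ := kl
    induction k using Fin.lastCases with
    | last =>
      induction l using Fin.lastCases with
      | last =>
        have hcv : c (Fin.last m, Fin.last m) = 0 := by simp [hc]
        rw [hcv]
        have hev : ∀ᶠ u in nhdsWithin (0:ℝ) (Set.Ioi 0),
            ((w i (Fin.last m) * w j (Fin.last m)) * u : ℝ)
              = (μ (P (Fin.last m, Fin.last m) u)).toReal / u := by
          filter_upwards [Ioo_mem_nhdsGT_of_mem (by norm_num : (0:ℝ) ∈ Ico (0:ℝ) 1)] with u hu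
          rw [hll u, stdUniform_Iic hu.1.le hu.2.le,
            ENNReal.toReal_mul, ENNReal.toReal_mul, ENNReal.toReal_mul,
            ENNReal.toReal_ofReal (hw0 i _), ENNReal.toReal_ofReal (hw0 j _),
            ENNReal.toReal_ofReal hu.1.le]
          rw [eq_div_iff (ne_of_gt hu.1)]
          ring
        refine Tendsto.congr' hev ?_
        have h0 : Tendsto (fun u : ℝ => (w i (Fin.last m) * w j (Fin.last m)) * u)
            (nhdsWithin 0 (Set.Ioi 0)) (nhds ((w i (Fin.last m) * w j (Fin.last m)) * 0)) :=
          (tendsto_id.const_mul _).mono_left nhdsWithin_le_nhds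
        simpa using h0
      | cast l₀ =>
        have hcv : c (Fin.last m, Fin.castSucc l₀) = 0 := by simp [hc]
        rw [hcv]
        have hev : ∀ᶠ u in nhdsWithin (0:ℝ) (Set.Ioi 0),
            ((w i (Fin.last m) * Q j l₀) * u : ℝ)
              = (μ (P (Fin.last m, Fin.castSucc l₀) u)).toReal / u := by
          filter_upwards [Ioo_mem_nhdsGT_of_mem (by norm_num : (0:ℝ) ∈ Ico (0:ℝ) 1)] with u hu
          rw [hlc u l₀, stdUniform_Iic hu.1.le hu.2.le,
            margin_Iic (Yi := fun ω' => Y' ω' l₀) ((measurable_pi_apply l₀).comp hY'meas) (hY'margin l₀) hu.1.le hu.2.le,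
            ENNReal.toReal_mul, ENNReal.toReal_mul, ENNReal.toReal_mul,
            ENNReal.toReal_ofReal (hw0 i _), ENNReal.toReal_ofReal (hQnonneg j l₀),
            ENNReal.toReal_ofReal hu.1.le]
          rw [eq_div_iff (ne_of_gt hu.1)]
          ring
        refine Tendsto.congr' hev ?_
        have h0 : Tendsto (fun u : ℝ => (w i (Fin.last m) * Q j l₀) * u)
            (nhdsWithin 0 (Set.Ioi 0)) (nhds ((w i (Fin.last m) * Q j l₀) * 0)) :=
          (tendsto_id.const_mul _).mono_left nhdsWithin_le_nhds
        simpa using h0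
    | cast k₀ =>
      induction l using Fin.lastCases with
      | last =>
        have hcv : c (Fin.castSucc k₀, Fin.last m) = 0 := by simp [hc]
        rw [hcv]
        have hev : ∀ᶠ u in nhdsWithin (0:ℝ) (Set.Ioi 0),
            ((Q i k₀ * w j (Fin.last m)) * u : ℝ)
              = (μ (P (Fin.castSucc k₀, Fin.last m) u)).toReal / u := by
          filter_upwards [Ioo_mem_nhdsGT_of_mem (by norm_num : (0:ℝ) ∈ Ico (0:ℝ) 1)] with u hu
          rw [hcl u k₀, stdUniform_Iic hu.1.le hu.2.le,
            margin_Iic (Yi := fun ω' => Y' ω' k₀) ((measurable_pi_apply k₀).comp hY'meas) (hY'margin k₀) hu.1.le hu.2.le,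
            ENNReal.toReal_mul, ENNReal.toReal_mul, ENNReal.toReal_mul,
            ENNReal.toReal_ofReal (hQnonneg i k₀), ENNReal.toReal_ofReal (hw0 j _),
            ENNReal.toReal_ofReal hu.1.le]
          rw [eq_div_iff (ne_of_gt hu.1)]
          ring
        refine Tendsto.congr' hev ?_
        have h0 : Tendsto (fun u : ℝ => (Q i k₀ * w j (Fin.last m)) * u)
            (nhdsWithin 0 (Set.Ioi 0)) (nhds ((Q i k₀ * w j (Fin.last m)) * 0)) :=
          (tendsto_id.const_mul _).mono_left nhdsWithin_le_nhds
        simpa using h0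
      | cast l₀ =>
        have hcv : c (Fin.castSucc k₀, Fin.castSucc l₀)
            = (Q i k₀ * Q j l₀) * Λ k₀ l₀ := by
          simp [hc]
          ring
        rw [hcv]
        have heq : ∀ u : ℝ, (μ (P (Fin.castSucc k₀, Fin.castSucc l₀) u)).toReal / u
            = (Q i k₀ * Q j l₀) *
              ((μ' {ω' | Y' ω' k₀ ≤ u ∧ Y' ω' l₀ ≤ u}).toReal / u) := by
          intro u
          rw [hcc u k₀ l₀, ENNReal.toReal_mul, ENNReal.toReal_mul,
            ENNReal.toReal_ofReal (hQnonneg i k₀), ENNReal.toReal_ofReal (hQnonneg j l₀)]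
          ring
        refine Tendsto.congr (fun u => (heq u).symm) ?_
        exact Tendsto.const_mul _ (hY'tail k₀ l₀)

end Main


/-- Proposition 4.4: for a row-substochastic `Q` and a tail-dependence matrix `Λ`,
`L(Q Λ Qᵀ)` is a tail-dependence matrix; in particular `L(Q Qᵀ)` is a tail-dependence matrix,
and `L(p pᵀ)` is a tail-dependence matrix for every `p ∈ [0,1]^d`. -/
theorem L_substochastic_tail_dependence {d m : ℕ} (Q : Matrix (Fin d) (Fin m) ℝ)
    (hQnonneg : ∀ i j, 0 ≤ Q i j) (hQrow : ∀ i, (∑ j, Q i j) ≤ 1)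
    (Λ : Matrix (Fin m) (Fin m) ℝ) (hΛ : IsTailDependenceMatrix Λ) :
    IsTailDependenceMatrix (diagOne (Q * Λ * Q.transpose)) ∧
    IsTailDependenceMatrix (diagOne (Q * Q.transpose)) ∧
    (∀ p : Fin d → ℝ, (∀ i, p i ∈ Set.Icc (0:ℝ) 1) →
      IsTailDependenceMatrix (diagOne (Matrix.vecMulVec p p))) := by
  refine ⟨main_TDM Q hQnonneg hQrow Λ hΛ, ?_, ?_⟩
  · have h1 := main_TDM Q hQnonneg hQrow 1 (identity_TDM m)
    rwa [Matrix.mul_one] at h1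
  · intro p hp
    set Q' : Matrix (Fin d) (Fin 1) ℝ := Matrix.of fun i _ => p i with hQ'
    have hn : ∀ i j, 0 ≤ Q' i j := fun i _ => (hp i).1
    have hr : ∀ i, (∑ j, Q' i j) ≤ 1 := by
      intro i
      simpa [hQ'] using (hp i).2
    have h2 := main_TDM Q' hn hr 1 (identity_TDM 1)
    rw [Matrix.mul_one] at h2
    have hv : Matrix.vecMulVec p p = Q' * Q'.transpose := by
      ext i j
      simp [Matrix.vecMulVec_apply, Matrix.mul_apply, hQ']
    rwa [hv]
end
end
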